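/- arXiv:0902.3422 — 7 statements merged into one kernel-verified Lean document; each statement's English description precedes it below -/
import Mathlib

section
/- Let {e_n} be a semi-normalized strongly summing basic sequence in a Banach space with difference sequence {v_n} (v_1 = e_1, v_n = e_n - e_{n-1} for n > 1). If {v_n} is supershrinking, then {e_n} is boundedly complete. -/
open Filter Finset NormedSpace

noncomputable section

variable {X : Type*} [NormedAddCommGroup X] [NormedSpace ℝ X]

/-- Partial sums `∑_{i<n} a i • e i`. -/
def PartialSum (e : ℕ → X) (a : ℕ → ℝ) (n : ℕ) : X :=
  ∑ i ∈ Finset.range n, a i • e i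

/-- A (Schauder) basic sequence, via the basis-constant inequality. -/
def IsBasicSeq (e : ℕ → X) : Prop :=
  (∀ n, e n ≠ 0) ∧ ∃ K : ℝ, 1 ≤ K ∧ ∀ (a : ℕ → ℝ) (m n : ℕ), m ≤ n →
    ‖PartialSum e a m‖ ≤ K * ‖PartialSum e a n‖

def SemiNormalized (e : ℕ → X) : Prop :=
  ∃ c C : ℝ, 0 < c ∧ ∀ n, c ≤ ‖e n‖ ∧ ‖e n‖ ≤ C

def BoundedPartialSums (e : ℕ → X) (a : ℕ → ℝ) : Prop :=
  ∃ M : ℝ, ∀ n, ‖PartialSum e a n‖ ≤ M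

def SeriesConverges (e : ℕ → X) (a : ℕ → ℝ) : Prop :=
  ∃ x : X, Filter.Tendsto (PartialSum e a) Filter.atTop (nhds x)

def BoundedlyComplete (e : ℕ → X) : Prop :=
  ∀ a : ℕ → ℝ, BoundedPartialSums e a → SeriesConverges e a

def WeaklyCauchy (e : ℕ → X) : Prop :=
  ∀ f : X →L[ℝ] ℝ, ∃ l : ℝ, Filter.Tendsto (fun n => f (e n)) Filter.atTop (nhds l)

def WeaklyConvergesTo (x : ℕ → X) (l : X) : Prop :=
  ∀ f : X →L[ℝ] ℝ, Filter.Tendsto (fun n => f (x n)) Filter.atTop (nhds (f l))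

def StronglySumming (e : ℕ → X) : Prop :=
  WeaklyCauchy e ∧ ∀ a : ℕ → ℝ, BoundedPartialSums e a →
    ∃ s : ℝ, Filter.Tendsto (fun n => ∑ i ∈ Finset.range n, a i) Filter.atTop (nhds s)

/-- Closed linear span of the tail `{e k : k ≥ n}`. -/
def tailSpan (e : ℕ → X) (n : ℕ) : Submodule ℝ X :=
  (Submodule.span ℝ {x | ∃ k, n ≤ k ∧ x = e k}).topologicalClosure

/-- Shrinking: the norms of a functional restricted to the tail spans tend to `0`. -/
def Shrinking (e : ℕ → X) : Prop :=
  ∀ f : X →L[ℝ] ℝ, ∀ ε > 0, ∃ N, ∀ n ≥ N, ∀ x ∈ tailSpan e n, ‖x‖ ≤ 1 → |f x| ≤ ε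

def Supershrinking (e : ℕ → X) : Prop :=
  Shrinking e ∧ ∀ a : ℕ → ℝ, Filter.Tendsto a Filter.atTop (nhds 0) →
    BoundedPartialSums e a → SeriesConverges e a

/-- Difference sequence: `v 0 = e 0`, `v n = e n - e (n-1)`. -/
def diffSeq (e : ℕ → X) : ℕ → X :=
  fun n => if n = 0 then e 0 else e n - e (n - 1)

def closedSpan (e : ℕ → X) : Submodule ℝ X :=
  (Submodule.span ℝ (Set.range e)).topologicalClosure

/-- A Banach space is reflexive iff the canonical embedding into the bidual is onto. -/
def BanachReflexive (Y : Type*) [NormedAddCommGroup Y] [NormedSpace ℝ Y] : Prop :=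
  Function.Surjective (NormedSpace.inclusionInDoubleDual ℝ Y)

/-- Order one quasireflexive: the canonical image of `Y` in `Y**` has codimension 1. -/
def OrderOneQuasireflexive (Y : Type*) [NormedAddCommGroup Y] [NormedSpace ℝ Y] : Prop :=
  Module.finrank ℝ ((StrongDual ℝ (StrongDual ℝ Y)) ⧸
    LinearMap.range (NormedSpace.inclusionInDoubleDual ℝ Y).toLinearMap) = 1

/-- A Schauder basis of `X` with coordinate functionals `f`. -/
def IsSchauderBasis (e : ℕ → X) (f : ℕ → X →L[ℝ] ℝ) : Prop :=
  (∀ n m, f n (e m) = if n = m then 1 else 0) ∧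
  ∀ x : X, Filter.Tendsto (fun n => ∑ i ∈ Finset.range n, f i x • e i)
    Filter.atTop (nhds x)

/-- `X` contains a sequence equivalent to the unit vector basis of `c₀`
(equivalently, a subspace isomorphic to `c₀`). -/
def ContainsC0 (X : Type*) [NormedAddCommGroup X] [NormedSpace ℝ X] : Prop :=
  ∃ (x : ℕ → X) (c C : ℝ), 0 < c ∧ ∀ (a : ℕ → ℝ) (n : ℕ),
    c * ((Finset.range (n+1)).sup' Finset.nonempty_range_add_one fun i => |a i|) ≤
        ‖∑ i ∈ Finset.range (n+1), a i • x i‖ ∧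
      ‖∑ i ∈ Finset.range (n+1), a i • x i‖ ≤
        C * ((Finset.range (n+1)).sup' Finset.nonempty_range_add_one fun i => |a i|)

/-- Equivalence of sequences: same convergent coefficient series. -/
def EquivSeq (e v : ℕ → X) : Prop :=
  ∀ a : ℕ → ℝ, SeriesConverges e a ↔ SeriesConverges v a


/-- A semi-normalized strongly summing basic sequence whose
difference sequence is supershrinking is boundedly complete. -/
theorem stmt0 {X : Type*} [NormedAddCommGroup X] [NormedSpace ℝ X] [CompleteSpace X]
    (e : ℕ → X) (hb : IsBasicSeq e) (hsn : SemiNormalized e)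
    (hss : StronglySumming e) (hsup : Supershrinking (diffSeq e)) :
    BoundedlyComplete e := by
  obtain ⟨c, C, hc, hbound⟩ := hsn
  intro a ha
  obtain ⟨M, hM⟩ := ha
  obtain ⟨s, hs⟩ := hss.2 a ⟨M, hM⟩
  set S : ℕ → ℝ := fun n => ∑ i ∈ Finset.range n, a i with hSdef
  set b : ℕ → ℝ := fun n => s - S n with hbdef
  have key : ∀ n, PartialSum (diffSeq e) b (n + 1)
      = PartialSum e a (n + 1) + (s - S (n + 1)) • e n := by
    intro n
    induction n with
    | zero =>
      simp [PartialSum, diffSeq, hbdef, hSdef, sub_smul]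
    | succ n ih =>
      have h1 : PartialSum (diffSeq e) b (n + 2)
          = PartialSum (diffSeq e) b (n + 1) + b (n + 1) • diffSeq e (n + 1) := by
        simp [PartialSum, Finset.sum_range_succ]
      have h2 : PartialSum e a (n + 2) = PartialSum e a (n + 1) + a (n + 1) • e (n + 1) := by
        simp [PartialSum, Finset.sum_range_succ]
      have h3 : S (n + 2) = S (n + 1) + a (n + 1) := by
        simp [hSdef, Finset.sum_range_succ]
      rw [h1, ih, h2, h3]
      simp only [diffSeq, Nat.succ_ne_zero, if_false, hbdef]
      simp only [Nat.add_sub_cancel]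
      simp only [smul_sub, sub_smul, add_smul]
      abel
  have hb0 : Tendsto b atTop (nhds 0) := by
    have := hs.const_sub s
    simpa [hbdef] using this
  obtain ⟨B, hB⟩ := hb0.cauchySeq.isBounded_range.exists_norm_le
  have hBnn : 0 ≤ B := le_trans (norm_nonneg (b 0)) (hB _ ⟨0, rfl⟩)
  have hCnn : 0 ≤ C := le_trans hc.le ((hbound 0).1.trans (hbound 0).2)
  have hbdd : BoundedPartialSums (diffSeq e) b := by
    refine ⟨M + B * C, fun n => ?_⟩
    cases n with
    | zero =>
      have hM0 : 0 ≤ M := le_trans (norm_nonneg _) (hM 0)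
      simpa [PartialSum] using add_nonneg hM0 (mul_nonneg hBnn hCnn)
    | succ n =>
      rw [key n]
      refine (norm_add_le _ _).trans (add_le_add (hM _) ?_)
      rw [norm_smul]
      have h1 : ‖s - S (n + 1)‖ ≤ B := hB _ ⟨n + 1, rfl⟩
      exact mul_le_mul h1 (hbound n).2 (norm_nonneg _) hBnn
  obtain ⟨x, hx⟩ := hsup.2 b hb0 hbdd
  refine ⟨x, ?_⟩
  have h1 : Tendsto (fun n => PartialSum (diffSeq e) b (n + 1)) atTop (nhds x) :=
    hx.comp (tendsto_add_atTop_nat 1)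
  have h2 : Tendsto (fun n => (s - S (n + 1)) • e n) atTop (nhds 0) := by
    refine squeeze_zero_norm (a := fun n => |s - S (n + 1)| * C) (fun n => ?_) ?_
    · rw [norm_smul]
      exact mul_le_mul_of_nonneg_left (hbound n).2 (abs_nonneg _)
    · have : Tendsto (fun n => s - S (n + 1)) atTop (nhds 0) := by
        simpa [Function.comp_def] using (hs.const_sub s).comp (tendsto_add_atTop_nat 1)
      simpa using (this.abs.mul_const C)
  have h3 : Tendsto (fun n => PartialSum e a (n + 1)) atTop (nhds x) := by
    have := h1.sub h2
    rw [sub_zero] at this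
    refine this.congr fun n => ?_
    rw [key n]; abel
  exact (tendsto_add_atTop_iff_nat 1).mp h3

end
end

section
/- Let {e_n} be a semi-normalized strongly summing basic sequence in a Banach space whose difference sequence {v_n} is supershrinking. Then the closed linear span [e_n] is order one quasireflexive, i.e., [e_n] has codimension 1 in its bidual [e_n]**. -/
open Filter Finset NormedSpace

noncomputable section

variable {X : Type*} [NormedAddCommGroup X] [NormedSpace ℝ X]

namespace QR1

variable {X : Type*} [NormedAddCommGroup X] [NormedSpace ℝ X]

lemma partialSum_succ (e : ℕ → X) (a : ℕ → ℝ) (n : ℕ) :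
    PartialSum e a (n + 1) = PartialSum e a n + a n • e n :=
  Finset.sum_range_succ _ _

lemma coeff_bound {e : ℕ → X} {K : ℝ}
    (hbK : ∀ (a : ℕ → ℝ) (m n : ℕ), m ≤ n → ‖PartialSum e a m‖ ≤ K * ‖PartialSum e a n‖)
    (a : ℕ → ℝ) {m n : ℕ} (h : m < n) :
    ‖a m • e m‖ ≤ 2 * K * ‖PartialSum e a n‖ := by
  have h1 := hbK a m n h.le
  have h2 := hbK a (m + 1) n h
  have heq : a m • e m = PartialSum e a (m + 1) - PartialSum e a m := by
    rw [partialSum_succ]; abel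
  rw [heq]
  calc ‖PartialSum e a (m+1) - PartialSum e a m‖
      ≤ ‖PartialSum e a (m+1)‖ + ‖PartialSum e a m‖ := norm_sub_le _ _
    _ ≤ K * ‖PartialSum e a n‖ + K * ‖PartialSum e a n‖ := add_le_add h2 h1
    _ = 2 * K * ‖PartialSum e a n‖ := by ring

lemma linIndep {e : ℕ → X} (hb : IsBasicSeq e) : LinearIndependent ℝ e := by
  classical
  obtain ⟨hne, K, hK1, hbK⟩ := hb
  rw [linearIndependent_iff']
  intro s g hg i hi
  set a : ℕ → ℝ := fun j => if j ∈ s then g j else 0 with ha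
  set n := (s.sup id) + 1 with hn
  have hsub : s ⊆ Finset.range n := by
    intro j hj
    simp only [Finset.mem_range, hn]
    exact Nat.lt_succ_of_le (Finset.le_sup (f := id) hj)
  have hps : PartialSum e a n = 0 := by
    rw [PartialSum, ← Finset.sum_subset hsub (by intro j _ hj; simp [ha, hj])]
    rw [← hg]
    exact Finset.sum_congr rfl fun j hj => by simp [ha, hj]
  have hin : i < n := Finset.mem_range.mp (hsub hi)
  have hcb := coeff_bound hbK a hin
  rw [hps, norm_zero, mul_zero] at hcb
  have hz : a i • e i = 0 := norm_le_zero_iff.mp hcb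
  rcases smul_eq_zero.mp hz with h | h
  · simpa [ha, hi] using h
  · exact absurd h (hne i)

lemma span_rep {e : ℕ → X} (li : LinearIndependent ℝ e) (z : Submodule.span ℝ (Set.range e)) :
    ∃ N : ℕ, (∀ i, N ≤ i → (Module.Basis.span li).coord i z = 0) ∧
      (z : X) = PartialSum e (fun i => (Module.Basis.span li).coord i z) N := by
  classical
  set B := Module.Basis.span li with hB
  set r := B.repr z with hr
  set N := r.support.sup id + 1 with hN
  have hout : ∀ i, N ≤ i → r i = 0 := by
    intro i hi
    by_contra h
    have : i ∈ r.support := Finsupp.mem_support_iff.mpr h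
    have : i < N := Nat.lt_succ_of_le (Finset.le_sup (f := id) this)
    omega
  have hcoord : ∀ i, B.coord i z = r i := fun i => rfl
  refine ⟨N, fun i hi => by rw [hcoord, hout i hi], ?_⟩
  have hz : (z : Submodule.span ℝ (Set.range e)) = ∑ i ∈ Finset.range N, r i • B i := by
    conv_lhs => rw [← B.linearCombination_repr z]
    rw [Finsupp.linearCombination_apply]
    apply Finsupp.sum_of_support_subset
    · intro i hi
      exact Finset.mem_range.mpr (Nat.lt_succ_of_le (Finset.le_sup (f := id) hi))
    · intro i _; exact zero_smul _ _
  have := congrArg (Subtype.val) hz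
  rw [this]
  simp only [PartialSum, hcoord]
  push_cast
  exact Finset.sum_congr rfl fun i _ => by rw [Module.Basis.span_apply]

end QR1
namespace QR1

variable {X : Type*} [NormedAddCommGroup X] [NormedSpace ℝ X]

lemma exists_coords {e : ℕ → X} (hb : IsBasicSeq e) {c C K : ℝ} (hc : 0 < c) (hK : 1 ≤ K)
    (hsn : ∀ n, c ≤ ‖e n‖ ∧ ‖e n‖ ≤ C)
    (hbK : ∀ (a : ℕ → ℝ) (m n : ℕ), m ≤ n → ‖PartialSum e a m‖ ≤ K * ‖PartialSum e a n‖) :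
    ∃ f : ℕ → (X →L[ℝ] ℝ),
      (∀ n m, f n (e m) = if n = m then 1 else 0) ∧
      (∀ z : Submodule.span ℝ (Set.range e), ∃ N, (∀ i, N ≤ i → f i z = 0) ∧
        (z : X) = PartialSum e (fun i => f i z) N) := by
  classical
  have li := linIndep hb
  set B := Module.Basis.span li with hB
  have hbound : ∀ (m : ℕ) (z : Submodule.span ℝ (Set.range e)),
      ‖B.coord m z‖ ≤ (2 * K / c) * ‖(z : X)‖ := by
    intro m z
    obtain ⟨N, h0, hrep⟩ := span_rep li z
    rcases lt_or_ge m N with hm | hm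
    · have hcb := coeff_bound hbK (fun i => (Module.Basis.span li).coord i z) hm
      rw [← hrep] at hcb
      have h1 : ‖B.coord m z‖ * c ≤ ‖B.coord m z‖ * ‖e m‖ :=
        mul_le_mul_of_nonneg_left (hsn m).1 (norm_nonneg _)
      have h2 : ‖B.coord m z‖ * ‖e m‖ = ‖(Module.Basis.span li).coord m z • e m‖ := by
        rw [norm_smul]
      have h3 : ‖B.coord m z‖ * c ≤ 2 * K * ‖(z : X)‖ := by
        rw [h2] at h1; exact h1.trans hcb
      rw [div_mul_eq_mul_div, le_div_iff₀ hc]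
      linarith
    · rw [h0 m hm]
      have : (0:ℝ) ≤ 2 * K / c := by positivity
      simpa using mul_nonneg this (norm_nonneg ((z : X)))
  set L : ℕ → (Submodule.span ℝ (Set.range e) →L[ℝ] ℝ) := fun m =>
    LinearMap.mkContinuous (B.coord m) (2 * K / c) (fun z => hbound m z) with hL
  have hext : ∀ m, ∃ g : X →L[ℝ] ℝ, (∀ z : Submodule.span ℝ (Set.range e), g z = L m z) ∧
      ‖g‖ = ‖L m‖ := fun m => exists_extension_norm_eq _ (L m)
  choose f hf _ using hext
  have hfcoord : ∀ m (z : Submodule.span ℝ (Set.range e)), f m z = B.coord m z := by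
    intro m z; rw [hf m z]; rfl
  refine ⟨f, ?_, ?_⟩
  · intro n m
    have he : e m ∈ Submodule.span ℝ (Set.range e) := Submodule.subset_span ⟨m, rfl⟩
    have : f n (e m) = B.coord n ⟨e m, he⟩ := hfcoord n ⟨e m, he⟩
    rw [this]
    have hBm : (⟨e m, he⟩ : Submodule.span ℝ (Set.range e)) = B m :=
      (Module.Basis.span_apply li m).symm
    rw [hBm, Module.Basis.coord_apply, Module.Basis.repr_self, Finsupp.single_apply]
    simp [eq_comm]
  · intro z
    obtain ⟨N, h0, hrep⟩ := span_rep li z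
    refine ⟨N, fun i hi => by rw [hfcoord]; exact h0 i hi, ?_⟩
    have hfun : (fun i => (f i) (z : X)) = fun i => (Module.Basis.span li).coord i z :=
      funext fun i => hfcoord i z
    rw [hfun]
    exact hrep

end QR1
namespace QR1

variable {X : Type*} [NormedAddCommGroup X] [NormedSpace ℝ X]

/-- The partial-sum projections associated to coordinate functionals. -/
def Pmap (e : ℕ → X) (f : ℕ → (X →L[ℝ] ℝ)) (n : ℕ) : X →L[ℝ] X :=
  ∑ i ∈ Finset.range n, (f i).smulRight (e i)

lemma Pmap_apply (e : ℕ → X) (f : ℕ → (X →L[ℝ] ℝ)) (n : ℕ) (x : X) :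
    Pmap e f n x = PartialSum e (fun i => f i x) n := by
  simp [Pmap, PartialSum, ContinuousLinearMap.sum_apply]

lemma partialSum_stable {e : ℕ → X} {f : ℕ → (X →L[ℝ] ℝ)} {x : X} {N : ℕ}
    (h0 : ∀ i, N ≤ i → f i x = 0) {n : ℕ} (hn : N ≤ n) :
    PartialSum e (fun i => f i x) n = PartialSum e (fun i => f i x) N := by
  unfold PartialSum
  refine (Finset.sum_subset (Finset.range_subset_range.mpr hn) ?_).symm
  intro i _ hi
  simp only []
  rw [h0 i (by simpa using hi)]
  simp

lemma P_bound {e : ℕ → X} {f : ℕ → (X →L[ℝ] ℝ)} {K : ℝ} (hK : 1 ≤ K)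
    (hbK : ∀ (a : ℕ → ℝ) (m n : ℕ), m ≤ n → ‖PartialSum e a m‖ ≤ K * ‖PartialSum e a n‖)
    (hrep : ∀ z : Submodule.span ℝ (Set.range e), ∃ N, (∀ i, N ≤ i → f i z = 0) ∧
        (z : X) = PartialSum e (fun i => f i z) N) :
    ∀ x ∈ closedSpan e, ∀ n, ‖Pmap e f n x‖ ≤ K * ‖x‖ := by
  intro x hx n
  have hclosed : IsClosed {y : X | ‖Pmap e f n y‖ ≤ K * ‖y‖} :=
    isClosed_le (continuous_norm.comp (Pmap e f n).continuous)
      (continuous_const.mul continuous_norm)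
  have hsub : (Submodule.span ℝ (Set.range e) : Set X) ⊆ {y : X | ‖Pmap e f n y‖ ≤ K * ‖y‖} := by
    intro y hy
    obtain ⟨N, h0, hr⟩ := hrep ⟨y, hy⟩
    simp only [Set.mem_setOf_eq, Pmap_apply]
    have h1 : ‖PartialSum e (fun i => f i y) n‖ ≤
        K * ‖PartialSum e (fun i => f i y) (max n N)‖ :=
      hbK _ n (max n N) (le_max_left _ _)
    rwa [partialSum_stable h0 (le_max_right _ _), ← hr] at h1
  have : x ∈ closure (Submodule.span ℝ (Set.range e) : Set X) := hx
  exact closure_minimal hsub hclosed this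

lemma P_tendsto {e : ℕ → X} {f : ℕ → (X →L[ℝ] ℝ)} {K : ℝ} (hK : 1 ≤ K)
    (hbK : ∀ (a : ℕ → ℝ) (m n : ℕ), m ≤ n → ‖PartialSum e a m‖ ≤ K * ‖PartialSum e a n‖)
    (hrep : ∀ z : Submodule.span ℝ (Set.range e), ∃ N, (∀ i, N ≤ i → f i z = 0) ∧
        (z : X) = PartialSum e (fun i => f i z) N) :
    ∀ x ∈ closedSpan e, Filter.Tendsto (fun n => Pmap e f n x) Filter.atTop (nhds x) := by
  intro x hx
  rw [Metric.tendsto_atTop]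
  intro ε hε
  have hKpos : (0:ℝ) < K + 1 := by linarith
  have hδ : 0 < ε / (2 * (K + 1)) := by positivity
  have hxcl : x ∈ closure (Submodule.span ℝ (Set.range e) : Set X) := hx
  obtain ⟨z, hz, hdz⟩ := Metric.mem_closure_iff.mp hxcl _ hδ
  obtain ⟨N, h0, hr⟩ := hrep ⟨z, hz⟩
  refine ⟨N, fun n hn => ?_⟩
  have hPz : Pmap e f n z = z := by
    rw [Pmap_apply, partialSum_stable h0 hn, ← hr]
  have hxz : x - z ∈ closedSpan e :=
    Submodule.sub_mem _ hx (Submodule.le_topologicalClosure _ hz)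
  have hb := P_bound hK hbK hrep (x - z) hxz n
  have hsplit : Pmap e f n x - x = Pmap e f n (x - z) + (z - x) := by
    rw [map_sub, hPz]; abel
  have hd : dist (Pmap e f n x) x = ‖Pmap e f n (x - z) + (z - x)‖ := by
    rw [dist_eq_norm, hsplit]
  rw [hd]
  have hzx : ‖z - x‖ < ε / (2 * (K + 1)) := by
    rw [← dist_eq_norm, dist_comm]; exact hdz
  have hxz' : ‖x - z‖ < ε / (2 * (K + 1)) := by rwa [norm_sub_rev] at hzx
  calc ‖Pmap e f n (x - z) + (z - x)‖ ≤ ‖Pmap e f n (x - z)‖ + ‖z - x‖ := norm_add_le _ _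
    _ ≤ K * ‖x - z‖ + ‖z - x‖ := add_le_add hb le_rfl
    _ < K * (ε / (2 * (K + 1))) + ε / (2 * (K + 1)) := by
        apply add_lt_add_of_le_of_lt _ hzx
        exact mul_le_mul_of_nonneg_left hxz'.le (by linarith)
    _ = (K + 1) * (ε / (2 * (K + 1))) := by ring
    _ < ε := by rw [mul_div_assoc']; rw [div_lt_iff₀ (by linarith)]; ring_nf; nlinarith
  done

lemma sep {e : ℕ → X} {K : ℝ}
    (hbK : ∀ (a : ℕ → ℝ) (m n : ℕ), m ≤ n → ‖PartialSum e a m‖ ≤ K * ‖PartialSum e a n‖)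
    {m n : ℕ} (h : m < n) : ‖e m‖ ≤ K * ‖e m - e n‖ := by
  classical
  set a : ℕ → ℝ := fun j => (if j = m then (1:ℝ) else 0) + (if j = n then (-1:ℝ) else 0) with ha
  have key : ∀ k, PartialSum e a k =
      (if m ∈ Finset.range k then e m else 0) + (if n ∈ Finset.range k then -(e n) else 0) := by
    intro k
    simp only [PartialSum, ha, add_smul, ite_smul, one_smul, zero_smul, neg_smul,
      Finset.sum_add_distrib, Finset.sum_ite_eq', Finset.sum_ite_eq]
  have h1 : PartialSum e a (m + 1) = e m := by
    rw [key]
    have hm : m ∈ Finset.range (m + 1) := Finset.self_mem_range_succ m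
    have hn : n ∉ Finset.range (m + 1) := by simp; omega
    simp [hm, hn]
  have h2 : PartialSum e a (n + 1) = e m - e n := by
    rw [key]
    have hm : m ∈ Finset.range (n + 1) := by simp; omega
    have hn : n ∈ Finset.range (n + 1) := Finset.self_mem_range_succ n
    simp [hm, hn]
    abel
  have := hbK a (m + 1) (n + 1) (by omega)
  rwa [h1, h2] at this

lemma exists_sigma [CompleteSpace X] {e : ℕ → X} {f : ℕ → (X →L[ℝ] ℝ)} {K : ℝ} (hK : 1 ≤ K)
    (hbK : ∀ (a : ℕ → ℝ) (m n : ℕ), m ≤ n → ‖PartialSum e a m‖ ≤ K * ‖PartialSum e a n‖)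
    (hrep : ∀ z : Submodule.span ℝ (Set.range e), ∃ N, (∀ i, N ≤ i → f i z = 0) ∧
        (z : X) = PartialSum e (fun i => f i z) N)
    (hss2 : ∀ a : ℕ → ℝ, BoundedPartialSums e a →
      ∃ s : ℝ, Filter.Tendsto (fun n => ∑ i ∈ Finset.range n, a i) Filter.atTop (nhds s)) :
    ∃ σ : ↥(closedSpan e) →L[ℝ] ℝ, ∀ x : ↥(closedSpan e),
      Filter.Tendsto (fun n => ∑ j ∈ Finset.range n, f j (x : X)) Filter.atTop (nhds (σ x)) := by
  classical
  have hYc : IsClosed ((closedSpan e : Submodule ℝ X) : Set X) :=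
    Submodule.isClosed_topologicalClosure _
  haveI : CompleteSpace ↥(closedSpan e) := hYc.completeSpace_coe
  set sn : ℕ → (↥(closedSpan e) →L[ℝ] ℝ) := fun n =>
    ∑ j ∈ Finset.range n, (f j).comp (closedSpan e).subtypeL with hsn
  have hsn_apply : ∀ n x, sn n x = ∑ j ∈ Finset.range n, f j (x : X) := by
    intro n x; simp [hsn, ContinuousLinearMap.sum_apply]
  have hpoint : ∀ x : ↥(closedSpan e), ∃ s, Filter.Tendsto (fun n => sn n x)
      Filter.atTop (nhds s) := by
    intro x
    have hbps : BoundedPartialSums e (fun i => f i (x : X)) := by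
      refine ⟨K * ‖(x : X)‖, fun n => ?_⟩
      rw [← Pmap_apply]
      exact P_bound hK hbK hrep _ x.2 n
    obtain ⟨s, hs⟩ := hss2 _ hbps
    exact ⟨s, by simpa only [hsn_apply] using hs⟩
  set σ₀ : ↥(closedSpan e) → ℝ := fun x => limUnder Filter.atTop (fun n => sn n x) with hσ₀
  have htend : ∀ x, Filter.Tendsto (fun n => sn n x) Filter.atTop (nhds (σ₀ x)) := fun x =>
    tendsto_nhds_limUnder (hpoint x)
  obtain ⟨C', hC'⟩ := banach_steinhaus (fun x => by
    obtain ⟨b, hb⟩ := (htend x).norm.bddAbove_range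
    exact ⟨b, fun i => hb ⟨i, rfl⟩⟩)
  set σL : ↥(closedSpan e) →ₗ[ℝ] ℝ :=
    { toFun := σ₀
      map_add' := by
        intro x y
        refine tendsto_nhds_unique (htend (x + y)) ?_
        have := (htend x).add (htend y)
        simpa only [map_add] using this
      map_smul' := by
        intro c x
        refine tendsto_nhds_unique (htend (c • x)) ?_
        have := (htend x).const_mul c
        simpa only [map_smul, smul_eq_mul, RingHom.id_apply] using this } with hσL
  refine ⟨LinearMap.mkContinuous σL C' ?_, ?_⟩
  · intro x
    refine le_of_tendsto (htend x).norm (Filter.Eventually.of_forall fun n => ?_)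
    calc ‖sn n x‖ ≤ ‖sn n‖ * ‖x‖ := (sn n).le_opNorm x
      _ ≤ C' * ‖x‖ := mul_le_mul_of_nonneg_right (hC' n) (norm_nonneg x)
  · intro x
    have : Filter.Tendsto (fun n => sn n x) Filter.atTop (nhds (σ₀ x)) := htend x
    show Filter.Tendsto _ _ (nhds (σ₀ x))
    simpa only [hsn_apply] using this

end QR1
namespace QR1

variable {X : Type*} [NormedAddCommGroup X] [NormedSpace ℝ X]

lemma e_mem_closedSpan (e : ℕ → X) (n : ℕ) : e n ∈ closedSpan e :=
  Submodule.le_topologicalClosure _ (Submodule.subset_span ⟨n, rfl⟩)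

lemma diffSeq_mem_span (e : ℕ → X) (n : ℕ) :
    diffSeq e n ∈ Submodule.span ℝ (Set.range e) := by
  unfold diffSeq
  split
  · exact Submodule.subset_span ⟨0, rfl⟩
  · exact Submodule.sub_mem _ (Submodule.subset_span ⟨n, rfl⟩)
      (Submodule.subset_span ⟨n - 1, rfl⟩)

lemma diffSeq_mem_closedSpan (e : ℕ → X) (n : ℕ) : diffSeq e n ∈ closedSpan e :=
  Submodule.le_topologicalClosure _ (diffSeq_mem_span e n)

lemma partialSum_mem_span (e : ℕ → X) (a : ℕ → ℝ) (n : ℕ) :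
    PartialSum e a n ∈ Submodule.span ℝ (Set.range e) :=
  Submodule.sum_mem _ fun i _ => Submodule.smul_mem _ _ (Submodule.subset_span ⟨i, rfl⟩)

/-- `e n` as an element of the closed span. -/
def eY (e : ℕ → X) (n : ℕ) : ↥(closedSpan e) := ⟨e n, e_mem_closedSpan e n⟩

/-- `diffSeq e n` as an element of the closed span. -/
def vY (e : ℕ → X) (n : ℕ) : ↥(closedSpan e) := ⟨diffSeq e n, diffSeq_mem_closedSpan e n⟩

/-- Coordinate functionals for the difference sequence. -/
def gY (e : ℕ → X) (f : ℕ → (X →L[ℝ] ℝ)) (σ : ↥(closedSpan e) →L[ℝ] ℝ) (i : ℕ) :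
    ↥(closedSpan e) →L[ℝ] ℝ :=
  σ - ∑ j ∈ Finset.range i, (f j).comp (closedSpan e).subtypeL

/-- Partial-sum projections for the difference sequence. -/
def QY (e : ℕ → X) (f : ℕ → (X →L[ℝ] ℝ)) (σ : ↥(closedSpan e) →L[ℝ] ℝ) (n : ℕ) :
    ↥(closedSpan e) →L[ℝ] ↥(closedSpan e) :=
  ∑ i ∈ Finset.range n, (gY e f σ i).smulRight (vY e i)

lemma telescope_diff (e : ℕ → X) : ∀ n, ∑ k ∈ Finset.range (n + 1), diffSeq e k = e n := by
  intro n
  induction n with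
  | zero => simp [diffSeq]
  | succ n ih =>
      rw [Finset.sum_range_succ, ih]
      have : diffSeq e (n + 1) = e (n + 1) - e n := by simp [diffSeq]
      rw [this]; abel

lemma diffSeq_as_partialSum (e : ℕ → X) (k : ℕ) :
    diffSeq e k = PartialSum e
      (fun j => (if j = k then (1:ℝ) else 0) - (if k = 0 then 0 else if j = k - 1 then 1 else 0))
      (k + 1) := by
  cases k with
  | zero => simp [diffSeq, PartialSum]
  | succ k =>
      have h1 : diffSeq e (k + 1) = e (k + 1) - e k := by simp [diffSeq]
      rw [h1]
      unfold PartialSum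
      simp only [Nat.succ_ne_zero, if_false, Nat.add_sub_cancel, sub_smul, ite_smul, one_smul,
        zero_smul, Finset.sum_sub_distrib, Finset.sum_ite_eq', Finset.mem_range]
      have hk1 : k + 1 < k + 1 + 1 := by omega
      have hk : k < k + 1 + 1 := by omega
      simp [hk1, hk]

lemma f_partialSum {e : ℕ → X} {f : ℕ → (X →L[ℝ] ℝ)}
    (hbi : ∀ n m, f n (e m) = if n = m then 1 else 0) (j : ℕ) (a : ℕ → ℝ) (N : ℕ) :
    f j (PartialSum e a N) = if j < N then a j else 0 := by
  simp [PartialSum, map_sum, map_smul, hbi, smul_eq_mul, mul_ite, mul_one, mul_zero,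
    Finset.sum_ite_eq, Finset.mem_range]

lemma sigma_partialSum {e : ℕ → X} {f : ℕ → (X →L[ℝ] ℝ)} {σ : ↥(closedSpan e) →L[ℝ] ℝ}
    (hbi : ∀ n m, f n (e m) = if n = m then 1 else 0)
    (hσ : ∀ x : ↥(closedSpan e),
      Filter.Tendsto (fun n => ∑ j ∈ Finset.range n, f j (x : X)) Filter.atTop (nhds (σ x)))
    (a : ℕ → ℝ) (N : ℕ) (h : PartialSum e a N ∈ closedSpan e) :
    σ ⟨PartialSum e a N, h⟩ = ∑ i ∈ Finset.range N, a i := by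
  have h1 := hσ ⟨PartialSum e a N, h⟩
  have h2 : ∀ n, N ≤ n → (∑ j ∈ Finset.range n, f j (PartialSum e a N)) =
      ∑ i ∈ Finset.range N, a i := by
    intro n hn
    rw [show (∑ j ∈ Finset.range n, f j (PartialSum e a N)) =
        ∑ j ∈ Finset.range n, if j < N then a j else 0 from
      Finset.sum_congr rfl fun j _ => f_partialSum hbi j a N]
    rw [← Finset.sum_subset (Finset.range_subset_range.mpr hn)
      (fun i _ hi => by simp at hi; simp [hi])]
    exact Finset.sum_congr rfl fun i hi => by simp at hi; simp [hi]
  have h3 : Filter.Tendsto (fun n => ∑ j ∈ Finset.range n, f j (PartialSum e a N))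
      Filter.atTop (nhds (∑ i ∈ Finset.range N, a i)) := by
    refine Filter.Tendsto.congr' ?_ tendsto_const_nhds
    filter_upwards [Filter.eventually_ge_atTop N] with n hn
    exact (h2 n hn).symm
  exact tendsto_nhds_unique h1 h3

lemma sigma_vY {e : ℕ → X} {f : ℕ → (X →L[ℝ] ℝ)} {σ : ↥(closedSpan e) →L[ℝ] ℝ}
    (hbi : ∀ n m, f n (e m) = if n = m then 1 else 0)
    (hσ : ∀ x : ↥(closedSpan e),
      Filter.Tendsto (fun n => ∑ j ∈ Finset.range n, f j (x : X)) Filter.atTop (nhds (σ x)))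
    (k : ℕ) : σ (vY e k) = if k = 0 then 1 else 0 := by
  have hmem : PartialSum e
      (fun j => (if j = k then (1:ℝ) else 0) - (if k = 0 then 0 else if j = k - 1 then 1 else 0))
      (k + 1) ∈ closedSpan e :=
    Submodule.le_topologicalClosure _ (partialSum_mem_span e _ _)
  have : vY e k = ⟨_, hmem⟩ := Subtype.ext (diffSeq_as_partialSum e k)
  rw [this, sigma_partialSum hbi hσ]
  cases k with
  | zero => simp
  | succ k =>
      simp only [Nat.succ_ne_zero, if_false, Nat.add_sub_cancel, Finset.sum_sub_distrib,
        Finset.sum_ite_eq', Finset.mem_range]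
      have hk1 : k + 1 < k + 1 + 1 := by omega
      have hk : k < k + 1 + 1 := by omega
      simp [hk1, hk]

lemma gY_apply (e : ℕ → X) (f : ℕ → (X →L[ℝ] ℝ)) (σ : ↥(closedSpan e) →L[ℝ] ℝ) (i : ℕ)
    (x : ↥(closedSpan e)) :
    gY e f σ i x = σ x - ∑ j ∈ Finset.range i, f j (x : X) := by
  simp [gY, ContinuousLinearMap.sum_apply]

lemma f_diffSeq {e : ℕ → X} {f : ℕ → (X →L[ℝ] ℝ)}
    (hbi : ∀ n m, f n (e m) = if n = m then 1 else 0) (j k : ℕ) :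
    f j (diffSeq e k) =
      (if j = k then (1:ℝ) else 0) - (if k = 0 then 0 else if j = k - 1 then 1 else 0) := by
  cases k with
  | zero => simp [diffSeq, hbi]
  | succ k => simp [diffSeq, hbi, map_sub]

lemma gY_vY {e : ℕ → X} {f : ℕ → (X →L[ℝ] ℝ)} {σ : ↥(closedSpan e) →L[ℝ] ℝ}
    (hbi : ∀ n m, f n (e m) = if n = m then 1 else 0)
    (hσ : ∀ x : ↥(closedSpan e),
      Filter.Tendsto (fun n => ∑ j ∈ Finset.range n, f j (x : X)) Filter.atTop (nhds (σ x)))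
    (i k : ℕ) : gY e f σ i (vY e k) = if i = k then 1 else 0 := by
  rw [gY_apply, sigma_vY hbi hσ]
  have hsum : (∑ j ∈ Finset.range i, f j ((vY e k : X))) =
      (if k < i then (1:ℝ) else 0) - (if k = 0 then 0 else if k - 1 < i then 1 else 0) := by
    have : ∀ j, f j ((vY e k : X)) =
        (if j = k then (1:ℝ) else 0) - (if k = 0 then 0 else if j = k - 1 then 1 else 0) :=
      fun j => f_diffSeq hbi j k
    rw [Finset.sum_congr rfl fun j _ => this j]
    rw [Finset.sum_sub_distrib]
    congr 1
    · simp [Finset.sum_ite_eq', Finset.mem_range]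
    · by_cases hk : k = 0
      · simp [hk]
      · simp [hk, Finset.sum_ite_eq', Finset.mem_range]
  rw [hsum]
  rcases Nat.eq_zero_or_pos k with hk | hk
  · subst hk
    simp only [if_pos rfl]
    by_cases hi : i = 0
    · simp [hi]
    · have : 0 < i := Nat.pos_of_ne_zero hi
      simp [hi, this]
  · have hk0 : k ≠ 0 := Nat.pos_iff_ne_zero.mp hk
    simp only [hk0, if_false]
    by_cases h1 : i = k
    · have h2 : ¬ (k < i) := by omega
      have h3 : k - 1 < i := by omega
      rw [if_neg h2, if_pos h3, if_pos h1]
      norm_num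
    · by_cases h4 : k < i
      · have h5 : k - 1 < i := by omega
        simp [h1, h4, h5]
      · have h5 : ¬ (k - 1 < i) := by omega
        simp [h1, h4, h5]

lemma eY_eq_sum_vY (e : ℕ → X) (n : ℕ) :
    eY e n = ∑ k ∈ Finset.range (n + 1), vY e k := by
  apply Subtype.ext
  rw [AddSubmonoidClass.coe_finset_sum]
  exact (telescope_diff e n).symm

lemma gY_eY {e : ℕ → X} {f : ℕ → (X →L[ℝ] ℝ)} {σ : ↥(closedSpan e) →L[ℝ] ℝ}
    (hbi : ∀ n m, f n (e m) = if n = m then 1 else 0)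
    (hσ : ∀ x : ↥(closedSpan e),
      Filter.Tendsto (fun n => ∑ j ∈ Finset.range n, f j (x : X)) Filter.atTop (nhds (σ x)))
    (i n : ℕ) : gY e f σ i (eY e n) = if i ≤ n then 1 else 0 := by
  rw [eY_eq_sum_vY, map_sum]
  rw [Finset.sum_congr rfl fun k _ => gY_vY hbi hσ i k]
  simp [Finset.sum_ite_eq', Finset.mem_range, Nat.lt_succ_iff]

lemma QY_apply (e : ℕ → X) (f : ℕ → (X →L[ℝ] ℝ)) (σ : ↥(closedSpan e) →L[ℝ] ℝ) (n : ℕ)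
    (x : ↥(closedSpan e)) :
    QY e f σ n x = ∑ i ∈ Finset.range n, gY e f σ i x • vY e i := by
  simp [QY, ContinuousLinearMap.sum_apply]

lemma QY_coe (e : ℕ → X) (f : ℕ → (X →L[ℝ] ℝ)) (σ : ↥(closedSpan e) →L[ℝ] ℝ) (n : ℕ)
    (x : ↥(closedSpan e)) :
    ((QY e f σ n x : ↥(closedSpan e)) : X) =
      ∑ i ∈ Finset.range n, gY e f σ i x • diffSeq e i := by
  rw [QY_apply, AddSubmonoidClass.coe_finset_sum]
  exact Finset.sum_congr rfl fun i _ => rfl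

lemma Pmap_succ_apply (e : ℕ → X) (f : ℕ → (X →L[ℝ] ℝ)) (n : ℕ) (x : X) :
    Pmap e f (n + 1) x = Pmap e f n x + f n x • e n := by
  rw [Pmap_apply, Pmap_apply, partialSum_succ]

lemma QY_succ_coe {e : ℕ → X} (f : ℕ → (X →L[ℝ] ℝ)) (σ : ↥(closedSpan e) →L[ℝ] ℝ) (n : ℕ)
    (x : ↥(closedSpan e)) :
    ((QY e f σ (n + 1) x : ↥(closedSpan e)) : X) =
      Pmap e f n (x : X) + (σ x - ∑ j ∈ Finset.range n, f j (x : X)) • e n := by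
  induction n with
  | zero =>
      rw [QY_coe]
      simp [gY_apply, Pmap, diffSeq]
  | succ n ih =>
      rw [QY_coe, Finset.sum_range_succ, ← QY_coe, ih]
      rw [gY_apply]
      have hd : diffSeq e (n + 1) = e (n + 1) - e n := by simp [diffSeq]
      rw [hd, Pmap_succ_apply, Finset.sum_range_succ]
      set A := σ x with hA
      set s := ∑ j ∈ Finset.range n, f j (x : X) with hs
      set t := f n (x : X) with ht
      rw [smul_sub, sub_smul, sub_smul]
      simp only [smul_sub, sub_smul, add_smul]
      abel

end QR1
namespace QR1

variable {X : Type*} [NormedAddCommGroup X] [NormedSpace ℝ X]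

lemma Pmap_mem (e : ℕ → X) (f : ℕ → (X →L[ℝ] ℝ)) (n : ℕ) (y : X) :
    Pmap e f n y ∈ closedSpan e := by
  rw [Pmap_apply]
  exact Submodule.le_topologicalClosure _ (partialSum_mem_span e _ n)

lemma sigma_Pmap {e : ℕ → X} {f : ℕ → (X →L[ℝ] ℝ)} {σ : ↥(closedSpan e) →L[ℝ] ℝ}
    (hbi : ∀ n m, f n (e m) = if n = m then 1 else 0)
    (hσ : ∀ x : ↥(closedSpan e),
      Filter.Tendsto (fun n => ∑ j ∈ Finset.range n, f j (x : X)) Filter.atTop (nhds (σ x)))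
    (y : X) (n : ℕ) :
    σ ⟨Pmap e f n y, Pmap_mem e f n y⟩ = ∑ j ∈ Finset.range n, f j y := by
  have h1 : (⟨Pmap e f n y, Pmap_mem e f n y⟩ : ↥(closedSpan e)) =
      ⟨PartialSum e (fun i => f i y) n,
        Submodule.le_topologicalClosure _ (partialSum_mem_span e _ n)⟩ :=
    Subtype.ext (Pmap_apply e f n y)
  rw [h1]; exact sigma_partialSum hbi hσ _ _ _

lemma QY_norm_bound {e : ℕ → X} {f : ℕ → (X →L[ℝ] ℝ)} {σ : ↥(closedSpan e) →L[ℝ] ℝ}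
    {c C K : ℝ} (hc : 0 < c) (hK : 1 ≤ K)
    (hsnC : ∀ n, c ≤ ‖e n‖ ∧ ‖e n‖ ≤ C)
    (hbK : ∀ (a : ℕ → ℝ) (m n : ℕ), m ≤ n → ‖PartialSum e a m‖ ≤ K * ‖PartialSum e a n‖)
    (hrep : ∀ z : Submodule.span ℝ (Set.range e), ∃ N, (∀ i, N ≤ i → f i z = 0) ∧
        (z : X) = PartialSum e (fun i => f i z) N)
    (hbi : ∀ n m, f n (e m) = if n = m then 1 else 0)
    (hσ : ∀ x : ↥(closedSpan e),
      Filter.Tendsto (fun n => ∑ j ∈ Finset.range n, f j (x : X)) Filter.atTop (nhds (σ x))) :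
    ∃ Kv : ℝ, 1 ≤ Kv ∧ ∀ n, ‖QY e f σ n‖ ≤ Kv := by
  have hC0 : 0 < C := lt_of_lt_of_le hc ((hsnC 0).1.trans (hsnC 0).2)
  have hσ0 : (0:ℝ) ≤ ‖σ‖ := norm_nonneg σ
  have hprod : (0:ℝ) ≤ ‖σ‖ * (1 + K) * C :=
    mul_nonneg (mul_nonneg hσ0 (by linarith)) hC0.le
  refine ⟨K + ‖σ‖ * (1 + K) * C + 1, by linarith, fun n => ?_⟩
  have hKv0 : (0:ℝ) ≤ K + ‖σ‖ * (1 + K) * C + 1 := by linarith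
  refine ContinuousLinearMap.opNorm_le_bound _ hKv0 fun x => ?_
  cases n with
  | zero =>
      simp only [QY, Finset.range_zero, Finset.sum_empty, ContinuousLinearMap.zero_apply,
        norm_zero]
      positivity
  | succ n =>
      have hnorm : ‖QY e f σ (n + 1) x‖ = ‖((QY e f σ (n + 1) x : ↥(closedSpan e)) : X)‖ := rfl
      rw [hnorm, QY_succ_coe]
      have hP : ‖Pmap e f n (x : X)‖ ≤ K * ‖x‖ := P_bound hK hbK hrep _ x.2 n
      have hcoef : |σ x - ∑ j ∈ Finset.range n, f j (x : X)| ≤ ‖σ‖ * ((1 + K) * ‖x‖) := by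
        rw [← sigma_Pmap hbi hσ (x : X) n, ← map_sub]
        calc |σ (x - ⟨Pmap e f n (x : X), Pmap_mem e f n (x : X)⟩)|
            ≤ ‖σ‖ * ‖x - (⟨Pmap e f n (x : X), Pmap_mem e f n (x : X)⟩ : ↥(closedSpan e))‖ :=
              σ.le_opNorm _
          _ ≤ ‖σ‖ * ((1 + K) * ‖x‖) := by
              refine mul_le_mul_of_nonneg_left ?_ hσ0
              have : ‖x - (⟨Pmap e f n (x : X), Pmap_mem e f n (x : X)⟩ : ↥(closedSpan e))‖ =
                  ‖(x : X) - Pmap e f n (x : X)‖ := rfl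
              rw [this]
              calc ‖(x : X) - Pmap e f n (x : X)‖ ≤ ‖(x : X)‖ + ‖Pmap e f n (x : X)‖ :=
                    norm_sub_le _ _
                _ ≤ ‖x‖ + K * ‖x‖ := add_le_add le_rfl hP
                _ = (1 + K) * ‖x‖ := by ring
      calc ‖Pmap e f n (x : X) + (σ x - ∑ j ∈ Finset.range n, f j (x : X)) • e n‖
          ≤ ‖Pmap e f n (x : X)‖ + |σ x - ∑ j ∈ Finset.range n, f j (x : X)| * ‖e n‖ := by
            refine (norm_add_le _ _).trans ?_
            rw [norm_smul, Real.norm_eq_abs]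
        _ ≤ K * ‖x‖ + (‖σ‖ * ((1 + K) * ‖x‖)) * C := by
            refine add_le_add hP ?_
            exact mul_le_mul hcoef (hsnC n).2 (norm_nonneg _) (by positivity)
        _ ≤ (K + ‖σ‖ * (1 + K) * C + 1) * ‖x‖ := by nlinarith [norm_nonneg x]

lemma QY_tendsto {e : ℕ → X} {f : ℕ → (X →L[ℝ] ℝ)} {σ : ↥(closedSpan e) →L[ℝ] ℝ}
    {c C K : ℝ} (hK : 1 ≤ K)
    (hsnC : ∀ n, c ≤ ‖e n‖ ∧ ‖e n‖ ≤ C)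
    (hbK : ∀ (a : ℕ → ℝ) (m n : ℕ), m ≤ n → ‖PartialSum e a m‖ ≤ K * ‖PartialSum e a n‖)
    (hrep : ∀ z : Submodule.span ℝ (Set.range e), ∃ N, (∀ i, N ≤ i → f i z = 0) ∧
        (z : X) = PartialSum e (fun i => f i z) N)
    (hσ : ∀ x : ↥(closedSpan e),
      Filter.Tendsto (fun n => ∑ j ∈ Finset.range n, f j (x : X)) Filter.atTop (nhds (σ x)))
    (x : ↥(closedSpan e)) :
    Filter.Tendsto (fun n => QY e f σ n x) Filter.atTop (nhds x) := by
  refine (Filter.tendsto_add_atTop_iff_nat 1).mp ?_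
  rw [tendsto_subtype_rng]
  have hcoe : (fun n => ((QY e f σ (n + 1) x : ↥(closedSpan e)) : X)) =
      fun n => Pmap e f n (x : X) + (σ x - ∑ j ∈ Finset.range n, f j (x : X)) • e n :=
    funext fun n => QY_succ_coe f σ n x
  rw [hcoe]
  have h1 : Filter.Tendsto (fun n => Pmap e f n (x : X)) Filter.atTop (nhds (x : X)) :=
    P_tendsto hK hbK hrep _ x.2
  have h2 : Filter.Tendsto (fun n => σ x - ∑ j ∈ Finset.range n, f j (x : X))
      Filter.atTop (nhds 0) := by
    have := Filter.Tendsto.sub (tendsto_const_nhds (x := σ x)) (hσ x)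
    simpa using this
  have h3 : Filter.Tendsto
      (fun n => (σ x - ∑ j ∈ Finset.range n, f j (x : X)) • e n) Filter.atTop (nhds 0) := by
    rw [tendsto_zero_iff_norm_tendsto_zero]
    have hb : ∀ n, ‖(σ x - ∑ j ∈ Finset.range n, f j (x : X)) • e n‖ ≤
        ‖σ x - ∑ j ∈ Finset.range n, f j (x : X)‖ * C := by
      intro n
      rw [norm_smul]
      exact mul_le_mul_of_nonneg_left (hsnC n).2 (norm_nonneg _)
    have h4 : Filter.Tendsto (fun n => ‖σ x - ∑ j ∈ Finset.range n, f j (x : X)‖ * C)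
        Filter.atTop (nhds 0) := by
      have := h2.norm.mul_const C
      simpa using this
    exact squeeze_zero (fun n => norm_nonneg _) hb h4
  have := h1.add h3
  simpa using this

end QR1
namespace QR1
set_option synthInstance.maxHeartbeats 1000000
set_option maxHeartbeats 1600000

variable {X : Type*} [NormedAddCommGroup X] [NormedSpace ℝ X]

lemma QY_fix {e : ℕ → X} {f : ℕ → (X →L[ℝ] ℝ)} {σ : ↥(closedSpan e) →L[ℝ] ℝ}
    (hbi : ∀ n m, f n (e m) = if n = m then 1 else 0)
    (hσ : ∀ x : ↥(closedSpan e),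
      Filter.Tendsto (fun n => ∑ j ∈ Finset.range n, f j (x : X)) Filter.atTop (nhds (σ x)))
    (hrep : ∀ z : Submodule.span ℝ (Set.range e), ∃ N, (∀ i, N ≤ i → f i z = 0) ∧
        (z : X) = PartialSum e (fun i => f i z) N)
    (x : ↥(closedSpan e)) (hx : (x : X) ∈ Submodule.span ℝ (Set.range e)) :
    ∃ N, ∀ m, N ≤ m → QY e f σ (m + 1) x = x := by
  obtain ⟨N, h0, hr⟩ := hrep ⟨(x : X), hx⟩
  have h0' : ∀ i, N ≤ i → f i (x : X) = 0 := h0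
  have hr' : (x : X) = PartialSum e (fun i => f i (x : X)) N := hr
  refine ⟨N, fun m hm => ?_⟩
  apply Subtype.ext
  rw [QY_succ_coe]
  have hPm : Pmap e f m (x : X) = (x : X) := by
    rw [Pmap_apply, partialSum_stable h0' hm]
    exact hr'.symm
  have hσx : σ x = ∑ j ∈ Finset.range N, f j (x : X) := by
    have hps := sigma_partialSum hbi hσ (fun i => f i (x : X)) N
      (Submodule.le_topologicalClosure _ (partialSum_mem_span e _ N))
    calc σ x = σ ⟨PartialSum e (fun i => f i (x : X)) N,
        Submodule.le_topologicalClosure _ (partialSum_mem_span e _ N)⟩ := by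
          congr 1
          exact Subtype.ext hr'
      _ = ∑ j ∈ Finset.range N, f j (x : X) := hps
  have hsm : ∑ j ∈ Finset.range m, f j (x : X) = ∑ j ∈ Finset.range N, f j (x : X) :=
    (Finset.sum_subset (Finset.range_subset_range.mpr hm)
      (fun i _ hi => h0' i (by simpa using hi))).symm
  rw [hPm, hσx, hsm, sub_self, zero_smul, add_zero]

lemma tail_mem {e : ℕ → X} {f : ℕ → (X →L[ℝ] ℝ)} {σ : ↥(closedSpan e) →L[ℝ] ℝ}
    (hbi : ∀ n m, f n (e m) = if n = m then 1 else 0)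
    (hσ : ∀ x : ↥(closedSpan e),
      Filter.Tendsto (fun n => ∑ j ∈ Finset.range n, f j (x : X)) Filter.atTop (nhds (σ x)))
    (hrep : ∀ z : Submodule.span ℝ (Set.range e), ∃ N, (∀ i, N ≤ i → f i z = 0) ∧
        (z : X) = PartialSum e (fun i => f i z) N)
    (n : ℕ) (x : ↥(closedSpan e)) :
    (x : X) - ((QY e f σ n x : ↥(closedSpan e)) : X) ∈ tailSpan (diffSeq e) n := by
  have hTclosed : IsClosed ((tailSpan (diffSeq e) n : Submodule ℝ X) : Set X) :=
    Submodule.isClosed_topologicalClosure _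
  have hAclosed : IsClosed {y : ↥(closedSpan e) |
      (y : X) - ((QY e f σ n y : ↥(closedSpan e)) : X) ∈ tailSpan (diffSeq e) n} := by
    have hcont : Continuous fun y : ↥(closedSpan e) =>
        (y : X) - ((QY e f σ n y : ↥(closedSpan e)) : X) :=
      continuous_subtype_val.sub (continuous_subtype_val.comp (QY e f σ n).continuous)
    exact hTclosed.preimage hcont
  have hDA : {y : ↥(closedSpan e) | (y : X) ∈ Submodule.span ℝ (Set.range e)} ⊆
      {y : ↥(closedSpan e) |
        (y : X) - ((QY e f σ n y : ↥(closedSpan e)) : X) ∈ tailSpan (diffSeq e) n} := by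
    intro y hy
    obtain ⟨N, hfix⟩ := QY_fix hbi hσ hrep y hy
    set M := max n N + 1 with hM
    have hMn : n ≤ M := by omega
    have hQM : QY e f σ M y = y := hfix (max n N) (by omega)
    simp only [Set.mem_setOf_eq]
    rw [show (y : X) = ((QY e f σ M y : ↥(closedSpan e)) : X) from by rw [hQM]]
    rw [QY_coe, QY_coe, ← Finset.sum_Ico_eq_sub _ hMn]
    refine Submodule.sum_mem _ fun i hi => ?_
    refine Submodule.smul_mem _ _ ?_
    exact Submodule.le_topologicalClosure _
      (Submodule.subset_span ⟨i, (Finset.mem_Ico.mp hi).1, rfl⟩)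
  have hxcl : x ∈ closure {y : ↥(closedSpan e) |
      (y : X) ∈ Submodule.span ℝ (Set.range e)} := by
    rw [Metric.mem_closure_iff]
    intro ε hε
    have hx2 : (x : X) ∈ closure ((Submodule.span ℝ (Set.range e) : Submodule ℝ X) : Set X) := x.2
    obtain ⟨z, hz, hdz⟩ := Metric.mem_closure_iff.mp hx2 ε hε
    exact ⟨⟨z, Submodule.le_topologicalClosure _ hz⟩, hz, by rwa [Subtype.dist_eq]⟩
  exact hAclosed.closure_subset (closure_mono hDA hxcl)

lemma phi_comp_QY (e : ℕ → X) (f : ℕ → (X →L[ℝ] ℝ)) (σ : ↥(closedSpan e) →L[ℝ] ℝ) (n : ℕ)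
    (φ : ↥(closedSpan e) →L[ℝ] ℝ) :
    φ.comp (QY e f σ n) = ∑ i ∈ Finset.range n, φ (vY e i) • gY e f σ i := by
  ext x
  simp only [ContinuousLinearMap.coe_comp', Function.comp_apply, QY_apply, map_sum, map_smul,
    smul_eq_mul, ContinuousLinearMap.sum_apply, ContinuousLinearMap.smul_apply]
  exact Finset.sum_congr rfl fun i _ => mul_comm _ _

lemma shr_scaled {ψ : X →L[ℝ] ℝ} {ε' : ℝ} {S : Submodule ℝ X}
    (h : ∀ w ∈ S, ‖w‖ ≤ 1 → |ψ w| ≤ ε') (hε' : 0 ≤ ε') :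
    ∀ w ∈ S, |ψ w| ≤ ε' * ‖w‖ := by
  intro w hw
  rcases eq_or_ne w 0 with rfl | hw0
  · simp
  · have hnorm : 0 < ‖w‖ := norm_pos_iff.mpr hw0
    have h1 := h (‖w‖⁻¹ • w) (S.smul_mem _ hw) (le_of_eq (norm_smul_inv_norm hw0))
    rw [map_smul, smul_eq_mul, abs_mul, abs_inv, abs_norm] at h1
    calc |ψ w| = ‖w‖ * (‖w‖⁻¹ * |ψ w|) := by field_simp
      _ ≤ ‖w‖ * ε' := mul_le_mul_of_nonneg_left h1 hnorm.le
      _ = ε' * ‖w‖ := mul_comm _ _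

lemma dual_approx {e : ℕ → X} {f : ℕ → (X →L[ℝ] ℝ)} {σ : ↥(closedSpan e) →L[ℝ] ℝ} {Kv : ℝ}
    (hbi : ∀ n m, f n (e m) = if n = m then 1 else 0)
    (hσ : ∀ x : ↥(closedSpan e),
      Filter.Tendsto (fun n => ∑ j ∈ Finset.range n, f j (x : X)) Filter.atTop (nhds (σ x)))
    (hrep : ∀ z : Submodule.span ℝ (Set.range e), ∃ N, (∀ i, N ≤ i → f i z = 0) ∧
        (z : X) = PartialSum e (fun i => f i z) N)
    (hshr : Shrinking (diffSeq e)) (hKv1 : 1 ≤ Kv) (hQb : ∀ n, ‖QY e f σ n‖ ≤ Kv)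
    (φ : ↥(closedSpan e) →L[ℝ] ℝ) :
    ∀ ε > 0, ∃ N, ∀ n, N ≤ n → ‖φ - φ.comp (QY e f σ n)‖ ≤ ε := by
  intro ε hε
  obtain ⟨ψ, hψ, -⟩ := exists_extension_norm_eq (closedSpan e) φ
  have hKv0 : (0:ℝ) < 1 + Kv := by linarith
  set ε' := ε / (2 * (1 + Kv)) with hε'
  have hε'pos : 0 < ε' := by positivity
  obtain ⟨N, hN⟩ := hshr ψ ε' hε'pos
  refine ⟨N, fun n hn => ?_⟩
  have hb : ∀ x : ↥(closedSpan e),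
      |φ (QY e f σ n x) - φ x| ≤ (ε' * (1 + Kv)) * ‖x‖ := by
    intro x
    have h1 : φ (QY e f σ n x) - φ x = -(ψ ((x : X) - ((QY e f σ n x : ↥(closedSpan e)) : X))) := by
      rw [map_sub ψ, hψ, hψ]
      ring
    rw [h1, abs_neg]
    have hmem := tail_mem hbi hσ hrep n x
    have h2 := shr_scaled (fun w hw hw1 => hN n hn w hw hw1) hε'pos.le _ hmem
    refine h2.trans ?_
    have h3 : ‖(x : X) - ((QY e f σ n x : ↥(closedSpan e)) : X)‖ ≤ (1 + Kv) * ‖x‖ := by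
      calc ‖(x : X) - ((QY e f σ n x : ↥(closedSpan e)) : X)‖
          ≤ ‖(x : X)‖ + ‖((QY e f σ n x : ↥(closedSpan e)) : X)‖ := norm_sub_le _ _
        _ ≤ ‖x‖ + Kv * ‖x‖ := by
            refine add_le_add le_rfl ?_
            exact ((QY e f σ n).le_opNorm x).trans
              (mul_le_mul_of_nonneg_right (hQb n) (norm_nonneg x))
        _ = (1 + Kv) * ‖x‖ := by ring
    calc ε' * ‖(x : X) - ((QY e f σ n x : ↥(closedSpan e)) : X)‖
        ≤ ε' * ((1 + Kv) * ‖x‖) := mul_le_mul_of_nonneg_left h3 hε'pos.le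
      _ = (ε' * (1 + Kv)) * ‖x‖ := by ring
  have hval : ε' * (1 + Kv) = ε / 2 := by
    rw [hε']
    field_simp
  have hop : ‖φ - φ.comp (QY e f σ n)‖ ≤ ε / 2 := by
    refine ContinuousLinearMap.opNorm_le_bound _ (by positivity) fun x => ?_
    have heq : (φ - φ.comp (QY e f σ n)) x = -(φ (QY e f σ n x) - φ x) := by simp
    rw [heq, norm_neg, Real.norm_eq_abs, ← hval]
    exact hb x
  linarith

lemma agree {e : ℕ → X} {f : ℕ → (X →L[ℝ] ℝ)} {σ : ↥(closedSpan e) →L[ℝ] ℝ} {Kv : ℝ}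
    (hbi : ∀ n m, f n (e m) = if n = m then 1 else 0)
    (hσ : ∀ x : ↥(closedSpan e),
      Filter.Tendsto (fun n => ∑ j ∈ Finset.range n, f j (x : X)) Filter.atTop (nhds (σ x)))
    (hrep : ∀ z : Submodule.span ℝ (Set.range e), ∃ N, (∀ i, N ≤ i → f i z = 0) ∧
        (z : X) = PartialSum e (fun i => f i z) N)
    (hshr : Shrinking (diffSeq e)) (hKv1 : 1 ≤ Kv) (hQb : ∀ n, ‖QY e f σ n‖ ≤ Kv)
    (F G : StrongDual ℝ (StrongDual ℝ ↥(closedSpan e)))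
    (h : ∀ i, F (gY e f σ i) = G (gY e f σ i)) : F = G := by
  haveI : IsScalarTower ℝ ℝ X := inferInstance
  ext φ
  have heq : ∀ n, F (φ.comp (QY e f σ n)) = G (φ.comp (QY e f σ n)) := by
    intro n
    rw [phi_comp_QY, map_sum, map_sum]
    exact Finset.sum_congr rfl fun i _ => by rw [map_smul, map_smul, h i]
  have key : ∀ ε, 0 < ε → |F φ - G φ| ≤ (‖F‖ + ‖G‖) * ε := by
    intro ε hε
    obtain ⟨N, hN⟩ := dual_approx hbi hσ hrep hshr hKv1 hQb φ ε hε
    have hd := hN N le_rfl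
    have h1 : F φ - G φ = F (φ - φ.comp (QY e f σ N)) - G (φ - φ.comp (QY e f σ N)) := by
      rw [map_sub, map_sub, heq N]
      ring
    rw [h1]
    have hF1 : |F (φ - φ.comp (QY e f σ N))| ≤ ‖F‖ * ε := by
      refine (le_trans (F.le_opNorm _) ?_)
      exact mul_le_mul_of_nonneg_left hd (norm_nonneg F)
    have hG1 : |G (φ - φ.comp (QY e f σ N))| ≤ ‖G‖ * ε := by
      refine (le_trans (G.le_opNorm _) ?_)
      exact mul_le_mul_of_nonneg_left hd (norm_nonneg G)
    calc |F (φ - φ.comp (QY e f σ N)) - G (φ - φ.comp (QY e f σ N))|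
        ≤ |F (φ - φ.comp (QY e f σ N))| + |G (φ - φ.comp (QY e f σ N))| := abs_sub _ _
      _ ≤ ‖F‖ * ε + ‖G‖ * ε := add_le_add hF1 hG1
      _ = (‖F‖ + ‖G‖) * ε := by ring
  by_contra hne
  have hδ : 0 < |F φ - G φ| := abs_pos.mpr (sub_ne_zero.mpr hne)
  set S := ‖F‖ + ‖G‖ with hS
  have hS0 : 0 ≤ S := add_nonneg (norm_nonneg F) (norm_nonneg G)
  set ε := |F φ - G φ| / (2 * S + 2) with hεdef
  have hεpos : 0 < ε := by positivity
  have h2 := key ε hεpos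
  have h3 : (2 * S + 2) * ε = |F φ - G φ| := by
    rw [hεdef]
    field_simp
  have h4 : S * ε < (2 * S + 2) * ε := by
    refine mul_lt_mul_of_pos_right (by linarith) hεpos
  linarith

lemma exists_F0 {e : ℕ → X} (hwc : WeaklyCauchy e) {c C : ℝ}
    (hsnC : ∀ n, c ≤ ‖e n‖ ∧ ‖e n‖ ≤ C) :
    ∃ F0 : StrongDual ℝ (StrongDual ℝ ↥(closedSpan e)), ∀ φ : StrongDual ℝ ↥(closedSpan e),
      Filter.Tendsto (fun n => φ (eY e n)) Filter.atTop (nhds (F0 φ)) := by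
  haveI : IsScalarTower ℝ ℝ X := inferInstance
  have hex : ∀ φ : StrongDual ℝ ↥(closedSpan e), ∃ l,
      Filter.Tendsto (fun n => φ (eY e n)) Filter.atTop (nhds l) := by
    intro φ
    obtain ⟨ψ, hψ, -⟩ := exists_extension_norm_eq (closedSpan e) φ
    obtain ⟨l, hl⟩ := hwc ψ
    exact ⟨l, hl.congr fun n => hψ (eY e n)⟩
  set F0fun : StrongDual ℝ ↥(closedSpan e) → ℝ :=
    fun φ => limUnder Filter.atTop (fun n => φ (eY e n)) with hF0fun
  have htend : ∀ φ, Filter.Tendsto (fun n => φ (eY e n)) Filter.atTop (nhds (F0fun φ)) :=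
    fun φ => tendsto_nhds_limUnder (hex φ)
  set F0L : StrongDual ℝ ↥(closedSpan e) →ₗ[ℝ] ℝ :=
    { toFun := F0fun
      map_add' := by
        intro φ ψ'
        refine tendsto_nhds_unique (htend (φ + ψ')) ?_
        have := (htend φ).add (htend ψ')
        simpa only [ContinuousLinearMap.add_apply] using this
      map_smul' := by
        intro r φ
        refine tendsto_nhds_unique (htend (r • φ)) ?_
        have := (htend φ).const_mul r
        simpa only [ContinuousLinearMap.coe_smul', Pi.smul_apply, smul_eq_mul, RingHom.id_apply] using this } with hF0L
  refine ⟨LinearMap.mkContinuous F0L C ?_, htend⟩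
  intro φ
  refine le_of_tendsto (htend φ).norm (Filter.Eventually.of_forall fun n => ?_)
  calc ‖φ (eY e n)‖ ≤ ‖φ‖ * ‖eY e n‖ := φ.le_opNorm _
    _ ≤ ‖φ‖ * C := mul_le_mul_of_nonneg_left ((hsnC n).2) (norm_nonneg φ)
    _ = C * ‖φ‖ := mul_comm _ _

lemma e_not_cauchy {e : ℕ → X} {c C K : ℝ} (hc : 0 < c) (hK : 1 ≤ K)
    (hsnC : ∀ n, c ≤ ‖e n‖ ∧ ‖e n‖ ≤ C)
    (hbK : ∀ (a : ℕ → ℝ) (m n : ℕ), m ≤ n → ‖PartialSum e a m‖ ≤ K * ‖PartialSum e a n‖) :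
    ¬ CauchySeq e := by
  intro h
  have hKpos : (0:ℝ) < K := lt_of_lt_of_le zero_lt_one hK
  have hpos : 0 < c / K := div_pos hc hKpos
  obtain ⟨N, hN⟩ := Metric.cauchySeq_iff'.mp h (c / K) hpos
  have h1 := hN (N + 1) (by omega)
  have h2 := sep hbK (show N < N + 1 by omega)
  have h3 : c ≤ K * ‖e N - e (N + 1)‖ := le_trans (hsnC N).1 h2
  rw [dist_eq_norm, norm_sub_rev] at h1
  have h4 : c / K ≤ ‖e N - e (N + 1)‖ := by
    rw [div_le_iff₀ hKpos]
    linarith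
  linarith

end QR1
namespace QR1
set_option synthInstance.maxHeartbeats 1000000
set_option maxHeartbeats 1600000

variable {X : Type*} [NormedAddCommGroup X] [NormedSpace ℝ X]

lemma diff_lower {e : ℕ → X} {c C K : ℝ} (hc : 0 < c) (hK : 1 ≤ K)
    (hsnC : ∀ n, c ≤ ‖e n‖ ∧ ‖e n‖ ≤ C)
    (hbK : ∀ (a : ℕ → ℝ) (m n : ℕ), m ≤ n → ‖PartialSum e a m‖ ≤ K * ‖PartialSum e a n‖)
    (n : ℕ) : c / K ≤ ‖diffSeq e n‖ := by
  have hKpos : (0:ℝ) < K := lt_of_lt_of_le zero_lt_one hK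
  cases n with
  | zero =>
      have h1 : c / K ≤ c := by
        rw [div_le_iff₀ hKpos]
        nlinarith
      simp only [diffSeq, if_pos rfl]
      exact h1.trans (hsnC 0).1
  | succ n =>
      have h2 := sep hbK (show n < n + 1 by omega)
      have h3 : c ≤ K * ‖e n - e (n + 1)‖ := le_trans (hsnC n).1 h2
      have h4 : c / K ≤ ‖e n - e (n + 1)‖ := by
        rw [div_le_iff₀ hKpos]
        linarith
      have h5 : diffSeq e (n + 1) = e (n + 1) - e n := by simp [diffSeq]
      rw [h5, norm_sub_rev]
      exact h4

lemma main_decomp {e : ℕ → X} {f : ℕ → (X →L[ℝ] ℝ)} {σ : ↥(closedSpan e) →L[ℝ] ℝ}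
    {Kv c C K : ℝ} (hc : 0 < c) (hK : 1 ≤ K)
    (hsnC : ∀ n, c ≤ ‖e n‖ ∧ ‖e n‖ ≤ C)
    (hbK : ∀ (a : ℕ → ℝ) (m n : ℕ), m ≤ n → ‖PartialSum e a m‖ ≤ K * ‖PartialSum e a n‖)
    (hrep : ∀ z : Submodule.span ℝ (Set.range e), ∃ N, (∀ i, N ≤ i → f i z = 0) ∧
        (z : X) = PartialSum e (fun i => f i z) N)
    (hbi : ∀ n m, f n (e m) = if n = m then 1 else 0)
    (hσ : ∀ x : ↥(closedSpan e),
      Filter.Tendsto (fun n => ∑ j ∈ Finset.range n, f j (x : X)) Filter.atTop (nhds (σ x)))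
    (hshr : Shrinking (diffSeq e)) (hKv1 : 1 ≤ Kv) (hQb : ∀ n, ‖QY e f σ n‖ ≤ Kv)
    (hss2 : ∀ a : ℕ → ℝ, BoundedPartialSums e a →
      ∃ s : ℝ, Filter.Tendsto (fun n => ∑ i ∈ Finset.range n, a i) Filter.atTop (nhds s))
    (hsup2 : ∀ a : ℕ → ℝ, Filter.Tendsto a Filter.atTop (nhds 0) →
      BoundedPartialSums (diffSeq e) a → SeriesConverges (diffSeq e) a)
    (F0 : StrongDual ℝ (StrongDual ℝ ↥(closedSpan e)))
    (hF0 : ∀ φ : StrongDual ℝ ↥(closedSpan e),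
      Filter.Tendsto (fun n => φ (eY e n)) Filter.atTop (nhds (F0 φ)))
    (F : StrongDual ℝ (StrongDual ℝ ↥(closedSpan e))) :
    ∃ (y : ↥(closedSpan e)) (lam : ℝ),
      F = NormedSpace.inclusionInDoubleDual ℝ ↥(closedSpan e) y + lam • F0 := by
  classical
  haveI : IsScalarTower ℝ ℝ X := inferInstance
  have hKpos : (0:ℝ) < K := lt_of_lt_of_le zero_lt_one hK
  have hC0 : 0 < C := lt_of_lt_of_le hc ((hsnC 0).1.trans (hsnC 0).2)
  have hKv0 : (0:ℝ) ≤ Kv := by linarith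
  set a : ℕ → ℝ := fun i => F (gY e f σ i) with ha
  set M := Kv * ‖F‖ with hM
  have hM0 : 0 ≤ M := mul_nonneg hKv0 (norm_nonneg F)
  -- the partial sums in the subtype
  have hφS : ∀ (n : ℕ) (φ : StrongDual ℝ ↥(closedSpan e)),
      φ (∑ i ∈ Finset.range n, a i • vY e i) = F (φ.comp (QY e f σ n)) := by
    intro n φ
    rw [phi_comp_QY, map_sum, map_sum]
    refine Finset.sum_congr rfl fun i _ => ?_
    rw [map_smul, map_smul, smul_eq_mul, smul_eq_mul]
    exact mul_comm _ _
  have hSb : ∀ n, ‖∑ i ∈ Finset.range n, a i • vY e i‖ ≤ M := by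
    intro n
    refine norm_le_dual_bound ℝ _ hM0 fun φ => ?_
    rw [hφS n φ, Real.norm_eq_abs]
    calc |F (φ.comp (QY e f σ n))| ≤ ‖F‖ * ‖φ.comp (QY e f σ n)‖ := F.le_opNorm _
      _ ≤ ‖F‖ * (‖φ‖ * Kv) := by
          refine mul_le_mul_of_nonneg_left ?_ (norm_nonneg F)
          exact (ContinuousLinearMap.opNorm_comp_le _ _).trans
            (mul_le_mul_of_nonneg_left (hQb n) (norm_nonneg φ))
      _ = M * ‖φ‖ := by rw [hM]; ring
  have hcoe : ∀ n, ((∑ i ∈ Finset.range n, a i • vY e i : ↥(closedSpan e)) : X) =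
      PartialSum (diffSeq e) a n := by
    intro n
    rw [AddSubmonoidClass.coe_finset_sum]
    exact Finset.sum_congr rfl fun i _ => rfl
  have hSbX : ∀ n, ‖PartialSum (diffSeq e) a n‖ ≤ M := by
    intro n
    rw [← hcoe]
    exact hSb n
  -- boundedness of the coefficients
  have habs : ∀ n, |a n| ≤ 2 * M / (c / K) := by
    intro n
    have hckpos : 0 < c / K := div_pos hc hKpos
    rw [le_div_iff₀ hckpos]
    have h1 : |a n| * (c / K) ≤ |a n| * ‖diffSeq e n‖ :=
      mul_le_mul_of_nonneg_left (diff_lower hc hK hsnC hbK n) (abs_nonneg _)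
    have h2 : |a n| * ‖diffSeq e n‖ = ‖a n • diffSeq e n‖ := by
      rw [norm_smul, Real.norm_eq_abs]
    have h3 : a n • diffSeq e n = PartialSum (diffSeq e) a (n + 1) - PartialSum (diffSeq e) a n := by
      rw [partialSum_succ]
      abel
    have h4 : ‖a n • diffSeq e n‖ ≤ 2 * M := by
      rw [h3]
      calc ‖PartialSum (diffSeq e) a (n+1) - PartialSum (diffSeq e) a n‖
          ≤ ‖PartialSum (diffSeq e) a (n+1)‖ + ‖PartialSum (diffSeq e) a n‖ := norm_sub_le _ _
        _ ≤ M + M := add_le_add (hSbX _) (hSbX _)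
        _ = 2 * M := by ring
    linarith [h1, h2 ▸ h1]
  -- the difference coefficients
  set d : ℕ → ℝ := fun i => a i - a (i + 1) with hd
  have hT : ∀ n, PartialSum e d n =
      PartialSum (diffSeq e) a (n + 1) - a n • e n := by
    intro n
    induction n with
    | zero =>
        show (0:X) = PartialSum (diffSeq e) a 1 - a 0 • e 0
        have : PartialSum (diffSeq e) a 1 = a 0 • e 0 := by
          simp [PartialSum, diffSeq]
        rw [this, sub_self]
    | succ n ih =>
        rw [partialSum_succ, ih, partialSum_succ (diffSeq e) a (n + 1)]
        have hdn : diffSeq e (n + 1) = e (n + 1) - e n := by simp [diffSeq]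
        rw [hdn]
        show _ + (a n - a (n+1)) • e n = _
        rw [sub_smul, smul_sub]
        abel
  have hTb : BoundedPartialSums e d := by
    refine ⟨M + (2 * M / (c / K)) * C, fun n => ?_⟩
    rw [hT]
    calc ‖PartialSum (diffSeq e) a (n+1) - a n • e n‖
        ≤ ‖PartialSum (diffSeq e) a (n+1)‖ + ‖a n • e n‖ := norm_sub_le _ _
      _ ≤ M + (2 * M / (c / K)) * C := by
          refine add_le_add (hSbX _) ?_
          rw [norm_smul, Real.norm_eq_abs]
          exact mul_le_mul (habs n) (hsnC n).2 (norm_nonneg _)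
            (by positivity)
  obtain ⟨s, hs⟩ := hss2 d hTb
  have hsum_d : ∀ n, ∑ i ∈ Finset.range n, d i = a 0 - a n := by
    intro n
    exact Finset.sum_range_sub' a n
  have hs' : Filter.Tendsto (fun n => a 0 - a n) Filter.atTop (nhds s) :=
    hs.congr fun n => hsum_d n
  have ha_lim : Filter.Tendsto a Filter.atTop (nhds (a 0 - s)) := by
    have := (tendsto_const_nhds (x := a 0)).sub hs'
    simpa using this
  set lam := a 0 - s with hlam
  set b : ℕ → ℝ := fun i => a i - lam with hb
  have hb0 : Filter.Tendsto b Filter.atTop (nhds 0) := by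
    have := ha_lim.sub (tendsto_const_nhds (x := lam))
    simpa using this
  have hPb : ∀ n, PartialSum (diffSeq e) b n =
      PartialSum (diffSeq e) a n - lam • (∑ k ∈ Finset.range n, diffSeq e k) := by
    intro n
    unfold PartialSum
    rw [Finset.smul_sum, ← Finset.sum_sub_distrib]
    exact Finset.sum_congr rfl fun i _ => by rw [sub_smul]
  have htelbound : ∀ n, ‖∑ k ∈ Finset.range n, diffSeq e k‖ ≤ C := by
    intro n
    cases n with
    | zero => simp; exact hC0.le
    | succ m =>
        rw [telescope_diff e m]
        exact (hsnC m).2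
  have hbpsb : BoundedPartialSums (diffSeq e) b := by
    refine ⟨M + |lam| * C, fun n => ?_⟩
    rw [hPb]
    calc ‖PartialSum (diffSeq e) a n - lam • (∑ k ∈ Finset.range n, diffSeq e k)‖
        ≤ ‖PartialSum (diffSeq e) a n‖ + ‖lam • (∑ k ∈ Finset.range n, diffSeq e k)‖ :=
          norm_sub_le _ _
      _ ≤ M + |lam| * C := by
          refine add_le_add (hSbX n) ?_
          rw [norm_smul, Real.norm_eq_abs]
          exact mul_le_mul_of_nonneg_left (htelbound n) (abs_nonneg _)
  obtain ⟨w, hw⟩ := hsup2 b hb0 hbpsb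
  have hYc : IsClosed ((closedSpan e : Submodule ℝ X) : Set X) :=
    Submodule.isClosed_topologicalClosure _
  have hwY : w ∈ closedSpan e := by
    refine hYc.mem_of_tendsto hw (Filter.Eventually.of_forall fun n => ?_)
    exact Submodule.le_topologicalClosure _
      (Submodule.sum_mem _ fun i _ => Submodule.smul_mem _ _ (diffSeq_mem_span e i))
  set y : ↥(closedSpan e) := ⟨w, hwY⟩ with hy
  set pn : ℕ → ↥(closedSpan e) := fun n => ∑ k ∈ Finset.range n, b k • vY e k with hpn
  have hpncoe : ∀ n, ((pn n : ↥(closedSpan e)) : X) = PartialSum (diffSeq e) b n := by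
    intro n
    rw [hpn]
    rw [AddSubmonoidClass.coe_finset_sum]
    exact Finset.sum_congr rfl fun i _ => rfl
  have htendY : Filter.Tendsto pn Filter.atTop (nhds y) := by
    rw [tendsto_subtype_rng]
    have : (fun n => ((pn n : ↥(closedSpan e)) : X)) = PartialSum (diffSeq e) b :=
      funext hpncoe
    rw [this]
    exact hw
  have hgy : ∀ i, gY e f σ i y = b i := by
    intro i
    have hc1 : Filter.Tendsto (fun n => gY e f σ i (pn n)) Filter.atTop
        (nhds (gY e f σ i y)) := ((gY e f σ i).continuous.tendsto y).comp htendY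
    have hc2 : ∀ n, i < n → gY e f σ i (pn n) = b i := by
      intro n hn
      rw [hpn]
      rw [map_sum]
      have : ∀ k, gY e f σ i (b k • vY e k) = if i = k then b k else 0 := by
        intro k
        rw [map_smul, smul_eq_mul, gY_vY hbi hσ]
        by_cases h : i = k <;> simp [h]
      rw [Finset.sum_congr rfl fun k _ => this k]
      rw [Finset.sum_ite_eq]
      simp [hn]
    refine tendsto_nhds_unique hc1 ?_
    refine Filter.Tendsto.congr' ?_ tendsto_const_nhds
    filter_upwards [Filter.eventually_gt_atTop i] with n hn
    exact (hc2 n hn).symm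
  have hF0g : ∀ i, F0 (gY e f σ i) = 1 := by
    intro i
    refine tendsto_nhds_unique (hF0 (gY e f σ i)) ?_
    refine Filter.Tendsto.congr' ?_ tendsto_const_nhds
    filter_upwards [Filter.eventually_ge_atTop i] with n hn
    rw [gY_eY hbi hσ, if_pos hn]
  refine ⟨y, lam, agree hbi hσ hrep hshr hKv1 hQb _ _ fun i => ?_⟩
  rw [ContinuousLinearMap.add_apply, ContinuousLinearMap.smul_apply, smul_eq_mul,
    NormedSpace.dual_def, hgy i, hF0g i]
  show a i = (a i - lam) + lam * 1
  ring

end QR1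
set_option synthInstance.maxHeartbeats 1000000 in
set_option maxHeartbeats 1600000 in
/-- under the same hypotheses, the closed linear span `[e n]`
is order one quasireflexive. -/
theorem stmt1 {X : Type*} [NormedAddCommGroup X] [NormedSpace ℝ X] [CompleteSpace X]
    (e : ℕ → X) (hb : IsBasicSeq e) (hsn : SemiNormalized e)
    (hss : StronglySumming e) (hsup : Supershrinking (diffSeq e)) :
    OrderOneQuasireflexive ↥(closedSpan e) := by
  classical
  haveI : IsScalarTower ℝ ℝ X := inferInstance
  obtain ⟨hne, K, hK, hbK⟩ := hb
  obtain ⟨c, C, hc, hsnC⟩ := hsn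
  obtain ⟨f, hbi, hrep⟩ := QR1.exists_coords ⟨hne, K, hK, hbK⟩ hc hK hsnC hbK
  obtain ⟨σ, hσ⟩ := QR1.exists_sigma hK hbK hrep hss.2
  obtain ⟨Kv, hKv1, hQb⟩ := QR1.QY_norm_bound hc hK hsnC hbK hrep hbi hσ
  obtain ⟨F0, hF0⟩ := QR1.exists_F0 hss.1 hsnC
  set J := NormedSpace.inclusionInDoubleDual ℝ ↥(closedSpan e) with hJ
  have hF0g : ∀ i, F0 (QR1.gY e f σ i) = 1 := by
    intro i
    refine tendsto_nhds_unique (hF0 (QR1.gY e f σ i)) ?_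
    refine Filter.Tendsto.congr' ?_ tendsto_const_nhds
    filter_upwards [Filter.eventually_ge_atTop i] with n hn
    rw [QR1.gY_eY hbi hσ, if_pos hn]
  have hF0notin : ∀ y : ↥(closedSpan e), J y ≠ F0 := by
    intro y hy
    have h1 : ∀ i, QR1.gY e f σ i y = 1 := by
      intro i
      have h2 : J y (QR1.gY e f σ i) = F0 (QR1.gY e f σ i) := by rw [hy]
      rw [hJ, NormedSpace.dual_def] at h2
      rw [h2, hF0g i]
    have h2 : ∀ n, QR1.QY e f σ (n + 1) y = QR1.eY e n := by
      intro n
      rw [QR1.QY_apply, QR1.eY_eq_sum_vY]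
      exact Finset.sum_congr rfl fun i _ => by rw [h1 i, one_smul]
    have h3 : Filter.Tendsto (fun n => QR1.eY e n) Filter.atTop (nhds y) := by
      have h4 := (Filter.tendsto_add_atTop_iff_nat 1).mpr
        (QR1.QY_tendsto hK hsnC hbK hrep hσ y)
      exact h4.congr h2
    have h5 : Filter.Tendsto e Filter.atTop (nhds ((y : ↥(closedSpan e)) : X)) :=
      tendsto_subtype_rng.mp h3
    exact QR1.e_not_cauchy hc hK hsnC hbK h5.cauchySeq
  have hdecomp : ∀ F : StrongDual ℝ (StrongDual ℝ ↥(closedSpan e)),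
      ∃ (y : ↥(closedSpan e)) (lam : ℝ), F = J y + lam • F0 :=
    fun F => QR1.main_decomp hc hK hsnC hbK hrep hbi hσ hsup.1 hKv1 hQb hss.2 hsup.2 F0 hF0 F
  unfold OrderOneQuasireflexive
  rw [finrank_eq_one_iff']
  refine ⟨Submodule.Quotient.mk F0, ?_, ?_⟩
  · intro hcontra
    rw [Submodule.Quotient.mk_eq_zero] at hcontra
    obtain ⟨y, hy⟩ := LinearMap.mem_range.mp hcontra
    exact hF0notin y hy
  · intro w
    obtain ⟨F, rfl⟩ := Submodule.Quotient.mk_surjective _ w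
    obtain ⟨y, lam, hF⟩ := hdecomp F
    refine ⟨lam, ?_⟩
    have hmk0 : (Submodule.Quotient.mk (J y) :
        (StrongDual ℝ (StrongDual ℝ ↥(closedSpan e))) ⧸
          LinearMap.range (NormedSpace.inclusionInDoubleDual ℝ ↥(closedSpan e)).toLinearMap) = 0 :=
      (Submodule.Quotient.mk_eq_zero _).mpr (LinearMap.mem_range.mpr ⟨y, rfl⟩)
    rw [hF, Submodule.Quotient.mk_add, hmk0, zero_add, Submodule.Quotient.mk_smul]

end
end

section
/- Let X be a Banach space with a semi-normalized supershrinking basis {e_n}. If v_n = ∑_{k=σ(n-1)+1}^{σ(n)} λ_k e_k is a block basic sequence of {e_n} with {λ_n} a bounded scalar sequence (and {v_n} semi-normalized basic), then {v_n} is a supershrinking basic sequence. -/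
open Filter Finset NormedSpace

noncomputable section

variable {X : Type*} [NormedAddCommGroup X] [NormedSpace ℝ X]

/-- a semi-normalized basic block sequence, with bounded
coefficients, of a semi-normalized supershrinking basis is supershrinking. -/
theorem stmt3 {X : Type*} [NormedAddCommGroup X] [NormedSpace ℝ X] [CompleteSpace X]
    (e : ℕ → X) (f : ℕ → X →L[ℝ] ℝ) (hbasis : IsSchauderBasis e f)
    (hsn : SemiNormalized e) (hsup : Supershrinking e)
    (σ : ℕ → ℕ) (hσ : StrictMono σ) (lam : ℕ → ℝ) (C : ℝ) (hC : ∀ k, |lam k| ≤ C)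
    (v : ℕ → X) (hv : ∀ n, v n = ∑ k ∈ Finset.Ioc (σ n) (σ (n+1)), lam k • e k)
    (hvb : IsBasicSeq v) (hvsn : SemiNormalized v) :
    Supershrinking v := by
  obtain ⟨hbio, hconv⟩ := hbasis
  obtain ⟨cv, Cv, hcv, hCv⟩ := hvsn
  -- uniformly bounded basis projections
  set P : ℕ → X →L[ℝ] X := fun m => ∑ i ∈ Finset.range m, (f i).smulRight (e i) with hPdef
  have hPapply : ∀ m x, P m x = ∑ i ∈ Finset.range m, f i x • e i := by
    intro m x
    simp [hPdef, ContinuousLinearMap.sum_apply]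
  obtain ⟨K, hK⟩ : ∃ K : ℝ, ∀ m, ‖P m‖ ≤ K := by
    apply banach_steinhaus
    intro x
    have h1 : BddAbove (Set.range fun m => ‖P m x‖) := by
      apply Filter.Tendsto.bddAbove_range (u := fun m => ‖P m x‖)
      have := (hconv x).norm
      refine this.congr fun m => ?_
      rw [hPapply]
    obtain ⟨Cx, hCx⟩ := h1
    exact ⟨Cx, fun m => hCx ⟨m, rfl⟩⟩
  have hKx : ∀ m x, ‖P m x‖ ≤ K * ‖x‖ := fun m x => (P m).le_of_opNorm_le (hK m) x
  -- coordinates of v n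
  have hfv : ∀ i n, f i (v n) = if i ∈ Finset.Ioc (σ n) (σ (n+1)) then lam i else 0 := by
    intro i n
    rw [hv n, map_sum]
    have h : ∀ k ∈ Finset.Ioc (σ n) (σ (n+1)),
        f i (lam k • e k) = if k = i then lam k else 0 := by
      intro k _
      rw [map_smul, hbio i k]
      by_cases h : i = k
      · simp [h]
      · simp [h, Ne.symm h]
    rw [Finset.sum_congr rfl h, Finset.sum_ite_eq' (Finset.Ioc (σ n) (σ (n+1))) i lam]
  have hPv : ∀ n m, m ≤ σ (n+1) + 1 →
      P m (v n) = ∑ k ∈ Finset.Ico (σ n + 1) m, lam k • e k := by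
    intro n m hm
    rw [hPapply]
    have h1 : ∀ i ∈ Finset.range m, f i (v n) • e i
        = if i ∈ Finset.Ioc (σ n) (σ (n+1)) then lam i • e i else 0 := by
      intro i _
      rw [hfv i n]
      split <;> simp
    rw [Finset.sum_congr rfl h1, ← Finset.sum_filter]
    apply Finset.sum_congr _ fun _ _ => rfl
    ext i
    simp only [Finset.mem_filter, Finset.mem_range, Finset.mem_Ioc, Finset.mem_Ico]
    omega
  constructor
  · -- Shrinking
    intro g ε hε
    obtain ⟨N, hN⟩ := hsup.1 g ε hε
    have hsub : ∀ n, tailSpan v n ≤ tailSpan e (σ n + 1) := by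
      intro n
      apply Submodule.topologicalClosure_minimal
      · rw [Submodule.span_le]
        rintro x ⟨k, hk, rfl⟩
        rw [hv k]
        apply Submodule.sum_mem
        intro j hj
        apply Submodule.smul_mem
        apply Submodule.le_topologicalClosure
        apply Submodule.subset_span
        refine ⟨j, ?_, rfl⟩
        simp only [Finset.mem_Ioc] at hj
        have := hσ.monotone hk
        omega
      · exact Submodule.isClosed_topologicalClosure _
    refine ⟨N, fun n hn x hx hxn => ?_⟩
    exact hN (σ n + 1) (by have := hσ.le_apply (x := n); omega) x (hsub n hx) hxn
  · -- boundedly complete on null coefficient sequences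
    intro a ha hbdd
    obtain ⟨M, hM⟩ := hbdd
    -- block index
    have hex : ∀ k : ℕ, ∃ n, k ≤ σ (n+1) := by
      intro k
      exact ⟨k, by have := hσ.le_apply (x := k + 1); omega⟩
    set idx : ℕ → ℕ := fun k => Nat.find (hex k) with hidxdef
    have hidx_le : ∀ k, k ≤ σ (idx k + 1) := fun k => Nat.find_spec (hex k)
    have hidx_lt : ∀ k, σ 0 < k → σ (idx k) < k := by
      intro k hk
      rcases Nat.eq_zero_or_pos (idx k) with h | h
      · rw [h]; exact hk
      · have h1 : idx k - 1 < idx k := Nat.sub_lt h Nat.one_pos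
        have hmin : ¬ k ≤ σ (idx k - 1 + 1) := Nat.find_min (hex k) h1
        have h2 : idx k - 1 + 1 = idx k := by omega
        rw [h2] at hmin
        omega
    have hidx_ge : ∀ N k, σ N < k → N ≤ idx k := by
      intro N k h
      by_contra hlt
      push_neg at hlt
      have h1 : σ (idx k + 1) ≤ σ N := hσ.monotone (by omega)
      have h2 := hidx_le k
      omega
    have hidx_unique : ∀ n k, σ n < k → k ≤ σ (n+1) → idx k = n := by
      intro n k h1 h2
      have le1 : idx k ≤ n := Nat.find_le h2
      have le2 : n ≤ idx k := hidx_ge n k h1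
      omega
    set b : ℕ → ℝ := fun k => if σ 0 < k then a (idx k) * lam k else 0 with hbdef
    have hbval : ∀ n k, σ n < k → k ≤ σ (n+1) → b k = a n * lam k := by
      intro n k h1 h2
      have h0 : σ 0 < k := lt_of_le_of_lt (hσ.monotone (Nat.zero_le n)) h1
      rw [hbdef]
      simp only [if_pos h0, hidx_unique n k h1 h2]
    have hbzero : ∀ k, k ≤ σ 0 → b k = 0 := by
      intro k hk
      rw [hbdef]
      exact if_neg (by omega)
    -- partial sum splitting
    have hsplit : ∀ m₁ m₂ : ℕ, m₁ ≤ m₂ →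
        PartialSum e b m₂ = PartialSum e b m₁ + ∑ k ∈ Finset.Ico m₁ m₂, b k • e k := by
      intro m₁ m₂ h
      unfold PartialSum
      rw [Finset.range_eq_Ico,
        ← Finset.sum_Ico_consecutive _ (Nat.zero_le m₁) h]
      rw [Finset.range_eq_Ico]
    have hblock : ∀ n m, m ≤ σ (n+1) + 1 →
        ∑ k ∈ Finset.Ico (σ n + 1) m, b k • e k = a n • P m (v n) := by
      intro n m h2
      rw [hPv n m h2, Finset.smul_sum]
      apply Finset.sum_congr rfl
      intro k hk
      simp only [Finset.mem_Ico] at hk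
      rw [hbval n k (by omega) (by omega), mul_smul]
    -- key identity
    have hpsum : ∀ n, PartialSum e b (σ n + 1) = PartialSum v a n := by
      intro n
      induction n with
      | zero =>
        unfold PartialSum
        rw [Finset.range_zero, Finset.sum_empty]
        apply Finset.sum_eq_zero
        intro i hi
        simp only [Finset.mem_range] at hi
        rw [hbzero i (by omega), zero_smul]
      | succ n ih =>
        have hs : σ n + 1 ≤ σ (n+1) + 1 := by
          have := hσ (show n < n + 1 by omega); omega
        rw [hsplit (σ n + 1) (σ (n+1) + 1) hs, ih,
          hblock n (σ (n+1) + 1) le_rfl]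
        have hfull : P (σ (n+1) + 1) (v n) = v n := by
          rw [hPv n _ le_rfl, hv n]
          apply Finset.sum_congr _ fun _ _ => rfl
          ext k
          simp only [Finset.mem_Ico, Finset.mem_Ioc]
          omega
        rw [hfull]
        unfold PartialSum
        rw [Finset.sum_range_succ]
    -- bound on |a|
    obtain ⟨A, hA⟩ : ∃ A : ℝ, ∀ n, |a n| ≤ A := by
      obtain ⟨A, hA⟩ := (ha.abs).bddAbove_range
      exact ⟨A, fun n => hA ⟨n, rfl⟩⟩
    -- bound on all partial sums of b
    have hM0 : 0 ≤ M := le_trans (norm_nonneg _) (hM 0)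
    have hA0 : 0 ≤ A := le_trans (abs_nonneg _) (hA 0)
    have hK0 : 0 ≤ K := le_trans (norm_nonneg _) (hK 0)
    have hCv0 : 0 ≤ Cv := le_trans (norm_nonneg _) (hCv 0).2
    have hbound : ∀ m, ‖PartialSum e b m‖ ≤ M + A * (K * Cv) := by
      intro m
      by_cases hm : m ≤ σ 0 + 1
      · have hz : PartialSum e b m = 0 := by
          apply Finset.sum_eq_zero
          intro i hi
          simp only [Finset.mem_range] at hi
          rw [hbzero i (by omega), zero_smul]
        rw [hz, norm_zero]
        positivity
      · push_neg at hm
        set n := idx (m - 1) with hn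
        have h1 : σ n < m - 1 := hidx_lt (m - 1) (by omega)
        have h2 : m - 1 ≤ σ (n+1) := hidx_le (m - 1)
        have heq : PartialSum e b m = PartialSum v a n + a n • P m (v n) := by
          rw [hsplit (σ n + 1) m (by omega), hpsum n, hblock n m (by omega)]
        rw [heq]
        calc ‖PartialSum v a n + a n • P m (v n)‖
            ≤ ‖PartialSum v a n‖ + ‖a n • P m (v n)‖ := norm_add_le _ _
          _ ≤ M + A * (K * Cv) := by
              apply add_le_add (hM n)
              rw [norm_smul, Real.norm_eq_abs]
              have h3 : ‖P m (v n)‖ ≤ K * Cv :=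
                le_trans (hKx m (v n)) (mul_le_mul_of_nonneg_left (hCv n).2 hK0)
              exact mul_le_mul (hA n) h3 (norm_nonneg _) hA0
    -- b tends to zero
    have hidx_tendsto : Filter.Tendsto idx Filter.atTop Filter.atTop :=
      Filter.tendsto_atTop_atTop.mpr fun N =>
        ⟨σ N + 1, fun k hk => hidx_ge N k (by omega)⟩
    have hC0 : 0 ≤ C := le_trans (abs_nonneg _) (hC 0)
    have hb0 : Filter.Tendsto b Filter.atTop (nhds 0) := by
      have hg : Filter.Tendsto (fun k => C * |a (idx k)|) Filter.atTop (nhds 0) := by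
        have h1 := ((ha.comp hidx_tendsto).abs).const_mul C
        simpa using h1
      apply squeeze_zero_norm' ?_ hg
      filter_upwards [Filter.eventually_ge_atTop (σ 0 + 1)] with k hk
      have hbk : b k = a (idx k) * lam k := if_pos (by omega)
      rw [Real.norm_eq_abs, hbk, abs_mul, mul_comm]
      exact mul_le_mul_of_nonneg_right (hC k) (abs_nonneg _)
    -- conclude
    obtain ⟨x, hx⟩ := hsup.2 b hb0 ⟨M + A * (K * Cv), hbound⟩
    refine ⟨x, ?_⟩
    have hfun : PartialSum v a = fun n => PartialSum e b (σ n + 1) :=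
      funext fun n => (hpsum n).symm
    rw [hfun]
    exact hx.comp (Filter.tendsto_atTop_atTop.mpr fun N =>
      ⟨N, fun k hk => by have := hσ.le_apply (x := k); omega⟩)

end
end

section
/- Let X be a Banach space such that every semi-normalized basic sequence in X has a subsequence whose closed linear span is reflexive. Then X is reflexive. -/
set_option synthInstance.maxHeartbeats 1000000
set_option maxHeartbeats 2000000


open Filter Finset NormedSpace

noncomputable section

variable {X : Type*} [NormedAddCommGroup X] [NormedSpace ℝ X]

section Aux

/-- Hahn-Banach: a functional of norm ≤ 1/r vanishing on a subspace `C` at distance ≥ r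
from `y₀`, taking value 1 at `y₀`. -/
theorem normingFunctional {E : Type*} [NormedAddCommGroup E] [NormedSpace ℝ E]
    (C : Submodule ℝ E) (y₀ : E) {r : ℝ} (hr : 0 < r)
    (hd : ∀ c ∈ C, r ≤ ‖y₀ - c‖) :
    ∃ g : E →L[ℝ] ℝ, ‖g‖ ≤ 1 / r ∧ (∀ c ∈ C, g c = 0) ∧ g y₀ = 1 := by
  classical
  set C' := C.topologicalClosure with hC'
  haveI hcl : IsClosed (C' : Set E) := C.isClosed_topologicalClosure
  have hd' : ∀ c ∈ C', r ≤ ‖y₀ - c‖ := by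
    intro c hc
    have hc2 : c ∈ closure (C : Set E) := by
      rw [← Submodule.topologicalClosure_coe]; exact hc
    have hset : closure (C : Set E) ⊆ {c | r ≤ ‖y₀ - c‖} := by
      apply closure_minimal (fun c hc => hd c hc)
      exact isClosed_le continuous_const ((continuous_const.sub continuous_id).norm)
    exact hset hc2
  have hy0 : r ≤ ‖(Submodule.Quotient.mk y₀ : E ⧸ C')‖ := by
    by_contra hlt
    push_neg at hlt
    obtain ⟨m, hm, hmn⟩ := Submodule.Quotient.norm_mk_lt
      (Submodule.Quotient.mk y₀ : E ⧸ C') (sub_pos.2 hlt)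
    have : y₀ - m ∈ C' := by
      have := (Submodule.Quotient.eq C').1 hm.symm
      exact this
    have := hd' _ this
    simp only [sub_sub_cancel] at this
    linarith
  have hy0' : (Submodule.Quotient.mk y₀ : E ⧸ C') ≠ 0 := by
    intro h0
    rw [h0, norm_zero] at hy0; linarith
  obtain ⟨g1, hg1, hg2⟩ := exists_dual_vector ℝ _ (norm_ne_zero_iff.2 hy0')
  let mkC : E →L[ℝ] (E ⧸ C') :=
    LinearMap.mkContinuous C'.mkQ 1 (fun m => by
      simpa using Submodule.Quotient.norm_mk_le (S := C') m)
  have hmkC : ‖mkC‖ ≤ 1 := LinearMap.mkContinuous_norm_le _ zero_le_one _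
  set R := ‖(Submodule.Quotient.mk y₀ : E ⧸ C')‖ with hR
  have hRpos : 0 < R := lt_of_lt_of_le hr hy0
  refine ⟨R⁻¹ • (g1.comp mkC), ?_, ?_, ?_⟩
  · have h1 : ‖g1.comp mkC‖ ≤ 1 := by
      calc ‖g1.comp mkC‖ ≤ ‖g1‖ * ‖mkC‖ := ContinuousLinearMap.opNorm_comp_le _ _
        _ ≤ 1 := by rw [hg1]; simpa using hmkC
    calc ‖R⁻¹ • (g1.comp mkC)‖ ≤ ‖R⁻¹‖ * ‖g1.comp mkC‖ := ContinuousLinearMap.opNorm_smul_le _ _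
      _ ≤ R⁻¹ * 1 := by
          apply mul_le_mul _ h1 (norm_nonneg _) (by positivity)
          rw [Real.norm_eq_abs, abs_of_pos (by positivity)]
      _ ≤ 1 / r := by
          rw [mul_one, one_div]
          exact inv_anti₀ hr hy0
  · intro c hc
    have hcC' : c ∈ C' := C.le_topologicalClosure hc
    have : mkC c = 0 := by
      simpa [mkC] using (Submodule.Quotient.mk_eq_zero C').2 hcC'
    simp [ContinuousLinearMap.comp_apply, this]
  · have : mkC y₀ = (Submodule.Quotient.mk y₀ : E ⧸ C') := rfl
    simp only [ContinuousLinearMap.smul_apply, ContinuousLinearMap.comp_apply, this, hg2]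
    simp only [RCLike.ofReal_real_eq_id, id_eq, ← hR]
    exact inv_mul_cancel₀ (ne_of_gt hRpos)


/-- If `g` vanishes on the common kernel of finitely many functionals, it's a linear
combination of them (pointwise). -/
theorem factor_through {E : Type*} [NormedAddCommGroup E] [NormedSpace ℝ E]
    (s : Finset (E →L[ℝ] ℝ)) (g : E →L[ℝ] ℝ)
    (hg : ∀ y : E, (∀ φ ∈ s, φ y = 0) → g y = 0) :
    ∃ c : {φ // φ ∈ s} → ℝ, ∀ y : E, g y = ∑ i : {φ // φ ∈ s}, c i * (i : E →L[ℝ] ℝ) y := by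
  classical
  set T : E →ₗ[ℝ] ({φ // φ ∈ s} → ℝ) :=
    LinearMap.pi (fun i : {φ // φ ∈ s} => ((i : E →L[ℝ] ℝ) : E →ₗ[ℝ] ℝ)) with hT
  have hker : LinearMap.ker T ≤ LinearMap.ker (g : E →ₗ[ℝ] ℝ) := by
    intro y hy
    simp only [LinearMap.mem_ker] at hy ⊢
    have : ∀ φ ∈ s, φ y = 0 := by
      intro φ hφ
      have := congrFun hy ⟨φ, hφ⟩
      simpa [hT] using this
    simpa using hg y this
  set gq : (E ⧸ LinearMap.ker T) →ₗ[ℝ] ℝ := (LinearMap.ker T).liftQ (g : E →ₗ[ℝ] ℝ) hker with hgq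
  set e := T.quotKerEquivRange with he
  set ℓ₀ : (LinearMap.range T) →ₗ[ℝ] ℝ := gq.comp e.symm.toLinearMap with hℓ₀
  obtain ⟨p, hp⟩ := (LinearMap.range T).exists_isCompl
  set ℓ : ({φ // φ ∈ s} → ℝ) →ₗ[ℝ] ℝ :=
    ℓ₀.comp ((LinearMap.range T).linearProjOfIsCompl p hp) with hℓ
  have key : ∀ y : E, g y = ℓ (T y) := by
    intro y
    have hmem : T y ∈ LinearMap.range T := LinearMap.mem_range_self T y
    have h1 : ((LinearMap.range T).linearProjOfIsCompl p hp) (T y) = ⟨T y, hmem⟩ :=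
      Submodule.linearProjOfIsCompl_apply_left hp ⟨T y, hmem⟩
    have h3 : e.symm ⟨T y, hmem⟩ = Submodule.Quotient.mk y := by
      rw [he]
      simpa using LinearMap.quotKerEquivRange_symm_apply_image (f := T) y hmem
    simp only [hℓ, LinearMap.comp_apply, h1, hℓ₀, LinearEquiv.coe_toLinearMap, h3, hgq]
    simp [Submodule.liftQ_apply]
  refine ⟨fun i => ℓ (fun j => if i = j then 1 else 0), fun y => ?_⟩
  rw [key y, LinearMap.pi_apply_eq_sum_univ ℓ (T y)]
  apply Finset.sum_congr rfl
  intro i _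
  simp [hT, mul_comm, smul_eq_mul]

/-- Finite solvability: values of `H` on finitely many functionals are realized in `E`. -/
theorem helly_sol {E : Type*} [NormedAddCommGroup E] [NormedSpace ℝ E]
    (H : (E →L[ℝ] ℝ) →L[ℝ] ℝ) (s : Finset (E →L[ℝ] ℝ)) :
    ∃ y : E, ∀ φ ∈ s, φ y = H φ := by
  classical
  set T : E →ₗ[ℝ] ({φ // φ ∈ s} → ℝ) :=
    LinearMap.pi (fun i : {φ // φ ∈ s} => ((i : E →L[ℝ] ℝ) : E →ₗ[ℝ] ℝ)) with hT
  set v : {φ // φ ∈ s} → ℝ := fun i => H (i : E →L[ℝ] ℝ) with hv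
  by_cases hmem : v ∈ LinearMap.range T
  · obtain ⟨y, hy⟩ := hmem
    exact ⟨y, fun φ hφ => by simpa [hT, hv] using congrFun hy ⟨φ, hφ⟩⟩
  · exfalso
    set R := LinearMap.range T with hR
    have hqv : R.mkQ v ≠ 0 := by
      simpa [Submodule.Quotient.mk_eq_zero] using hmem
    obtain ⟨ψ, hψ⟩ : ∃ ψ : Module.Dual ℝ (({φ // φ ∈ s} → ℝ) ⧸ R), ψ (R.mkQ v) ≠ 0 := by
      by_contra hall
      push_neg at hall
      exact hqv ((Module.forall_dual_apply_eq_zero_iff ℝ _).1 hall)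
    set ℓ : ({φ // φ ∈ s} → ℝ) →ₗ[ℝ] ℝ := ψ.comp R.mkQ with hℓ
    have hℓ0 : ∀ y : E, ℓ (T y) = 0 := by
      intro y
      have : R.mkQ (T y) = 0 := (Submodule.Quotient.mk_eq_zero _).2 (LinearMap.mem_range_self T y)
      simp [hℓ, this]
    set c : {φ // φ ∈ s} → ℝ := fun i => ℓ (fun j => if i = j then 1 else 0) with hc
    set φ₀ : E →L[ℝ] ℝ := ∑ i : {φ // φ ∈ s}, c i • (i : E →L[ℝ] ℝ) with hφ₀
    have hφ₀0 : φ₀ = 0 := by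
      ext y
      have := LinearMap.pi_apply_eq_sum_univ ℓ (T y)
      rw [hℓ0 y] at this
      simp only [hφ₀, ContinuousLinearMap.sum_apply, ContinuousLinearMap.smul_apply,
        ContinuousLinearMap.zero_apply]
      calc ∑ i : {φ // φ ∈ s}, c i • (i : E →L[ℝ] ℝ) y
          = ∑ i : {φ // φ ∈ s}, T y i • ℓ (fun j => if i = j then 1 else 0) := by
            apply Finset.sum_congr rfl; intro i _; simp [hT, hc, smul_eq_mul, mul_comm]
        _ = ℓ (T y) := (LinearMap.pi_apply_eq_sum_univ ℓ (T y)).symm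
        _ = 0 := hℓ0 y
    have h1 : H φ₀ = 0 := by rw [hφ₀0]; simp
    have h2 : H φ₀ = ℓ v := by
      rw [hφ₀]
      rw [map_sum]
      rw [LinearMap.pi_apply_eq_sum_univ ℓ v]
      apply Finset.sum_congr rfl
      intro i _
      simp [hv, hc, smul_eq_mul, mul_comm]
    exact hψ (by simpa [hℓ] using h2 ▸ h1)


/-- **Helly's theorem**: finite sets of values of `H ∈ E**` are realized by elements of `E`
of norm at most `‖H‖ + ε`. -/
theorem helly {E : Type*} [NormedAddCommGroup E] [NormedSpace ℝ E]
    (H : (E →L[ℝ] ℝ) →L[ℝ] ℝ) (s : Finset (E →L[ℝ] ℝ)) {ε : ℝ} (hε : 0 < ε) :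
    ∃ x : E, ‖x‖ ≤ ‖H‖ + ε ∧ ∀ φ ∈ s, φ x = H φ := by
  classical
  obtain ⟨y₀, hy₀⟩ := helly_sol H s
  by_cases hgood : ∃ w : E, (∀ φ ∈ s, φ w = 0) ∧ ‖y₀ - w‖ ≤ ‖H‖ + ε
  · obtain ⟨w, hw1, hw2⟩ := hgood
    refine ⟨y₀ - w, hw2, fun φ hφ => ?_⟩
    rw [map_sub, hw1 φ hφ, sub_zero, hy₀ φ hφ]
  · exfalso
    push_neg at hgood
    set r := ‖H‖ + ε with hrdef
    have hr : 0 < r := by positivity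
    set C : Submodule ℝ E := ⨅ φ ∈ s, LinearMap.ker (φ : E →ₗ[ℝ] ℝ) with hC
    have hmemC : ∀ w : E, w ∈ C ↔ ∀ φ ∈ s, φ w = 0 := by
      intro w
      simp [hC, Submodule.mem_iInf, LinearMap.mem_ker]
    have hd : ∀ c ∈ C, r ≤ ‖y₀ - c‖ := by
      intro c hc
      exact le_of_lt (hgood c ((hmemC c).1 hc))
    obtain ⟨g, hgnorm, hgC, hgy₀⟩ := normingFunctional C y₀ hr hd
    obtain ⟨c, hcg⟩ := factor_through s g (fun y hy => hgC y ((hmemC y).2 hy))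
    set φ₀ : E →L[ℝ] ℝ := ∑ i : {φ // φ ∈ s}, c i • (i : E →L[ℝ] ℝ) with hφ₀
    have hgeq : g = φ₀ := by
      ext y
      rw [hcg y]
      simp [hφ₀, smul_eq_mul]
    have hHφ₀ : H φ₀ = 1 := by
      have : H φ₀ = ∑ i : {φ // φ ∈ s}, c i * H (i : E →L[ℝ] ℝ) := by
        rw [hφ₀, map_sum]
        apply Finset.sum_congr rfl
        intro i _
        simp [smul_eq_mul]
      rw [this]
      have : ∑ i : {φ // φ ∈ s}, c i * H (i : E →L[ℝ] ℝ)
          = ∑ i : {φ // φ ∈ s}, c i * (i : E →L[ℝ] ℝ) y₀ := by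
        apply Finset.sum_congr rfl
        intro i _
        rw [hy₀ _ i.2]
      rw [this, ← hcg y₀, hgy₀]
    have hlt : |H φ₀| ≤ ‖H‖ * (1 / r) := by
      calc |H φ₀| ≤ ‖H‖ * ‖φ₀‖ := by
            simpa [Real.norm_eq_abs] using ContinuousLinearMap.le_opNorm H φ₀
        _ ≤ ‖H‖ * (1 / r) := by
            have h1 : ‖φ₀‖ ≤ 1 / r := by rw [← hgeq]; exact hgnorm
            gcongr
    rw [hHφ₀, abs_one] at hlt
    have : ‖H‖ * (1 / r) < 1 := by
      rw [mul_one_div, div_lt_one hr, hrdef]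
      linarith
    linarith


/-- Main construction: in a non-reflexive space there is a semi-normalized basic sequence
together with uniformly bounded functionals forming a "summing" triangular system. -/
theorem exists_bad_seq {X : Type*} [NormedAddCommGroup X] [NormedSpace ℝ X] [CompleteSpace X]
    (F : StrongDual ℝ (StrongDual ℝ X)) (hFr : F ∉ Set.range (inclusionInDoubleDual ℝ X)) :
    ∃ (x : ℕ → X) (f : ℕ → StrongDual ℝ X) (Cf : ℝ), 0 < Cf ∧
      IsBasicSeq x ∧ SemiNormalized x ∧ (∀ k, ‖f k‖ ≤ Cf) ∧
      (∀ k n, k ≤ n → f k (x n) = 1) ∧ (∀ k n, n < k → f k (x n) = 0) := by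
  classical
  set J := inclusionInDoubleDual ℝ X with hJdef
  have hJnorm : ∀ z : X, ‖J z‖ = ‖z‖ := fun z => (inclusionInDoubleDualLi ℝ (E := X)).norm_map z
  have hiso : Isometry (J : X → StrongDual ℝ (StrongDual ℝ X)) := (inclusionInDoubleDualLi ℝ (E := X)).isometry
  have hclosed : IsClosed (Set.range (J : X → StrongDual ℝ (StrongDual ℝ X))) :=
    hiso.isClosedEmbedding.isClosed_range
  set d := Metric.infDist F (Set.range (J : X → StrongDual ℝ (StrongDual ℝ X))) with hddef
  have hrne : (Set.range (J : X → StrongDual ℝ (StrongDual ℝ X))).Nonempty := ⟨J 0, Set.mem_range_self 0⟩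
  have hd0 : 0 < d := by
    rcases lt_or_eq_of_le (Metric.infDist_nonneg : 0 ≤ d) with h | h
    · exact h
    · exfalso
      have : F ∈ closure (Set.range (J : X → StrongDual ℝ (StrongDual ℝ X))) :=
        (Metric.mem_closure_iff_infDist_zero hrne).2 h.symm
      rw [hclosed.closure_eq] at this
      exact hFr this
  have hdist : ∀ y : X, d ≤ ‖F - J y‖ := by
    intro y
    have h := Metric.infDist_le_dist_of_mem (x := F) (Set.mem_range_self (f := (J : X → _)) y)
    exact h.trans_eq (dist_eq_norm F (J y))
  set M := ‖F‖ with hMdef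
  have hM0 : 0 ≤ M := norm_nonneg F
  have hMd : 0 < M + d := by linarith
  set θ := d / (M + d) with hθdef
  have hθ : 0 < θ := div_pos hd0 hMd
  have hθ1 : θ ≤ 1 := by rw [hθdef, div_le_one hMd]; linarith
  have hθMd : θ * (M + d) = d := by rw [hθdef]; field_simp
  -- Step 1: functionals in ker F norming every vector up to θ/2 (strictly).
  have hker : ∀ z : X, z ≠ 0 → ∃ g : StrongDual ℝ X, ‖g‖ ≤ 1 ∧ F g = 0 ∧ θ / 2 * ‖z‖ < g z := by
    intro z hz
    have hzn : 0 < ‖z‖ := norm_pos_iff.2 hz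
    -- distance from J z to ℝ F is at least θ‖z‖
    have hdC : ∀ c ∈ (Submodule.span ℝ {F} : Submodule ℝ (StrongDual ℝ (StrongDual ℝ X))),
        θ * ‖z‖ ≤ ‖J z - c‖ := by
      intro c hc
      obtain ⟨t, rfl⟩ := Submodule.mem_span_singleton.1 hc
      have hlow : ‖z‖ - |t| * M ≤ ‖J z - t • F‖ := by
        have h1 : ‖J z‖ - ‖t • F‖ ≤ ‖J z - t • F‖ := norm_sub_norm_le (J z) (t • F)
        rw [hJnorm, (NormedSpace.toNormSMulClass (𝕜 := ℝ) (E := StrongDual ℝ (StrongDual ℝ X))).norm_smul, Real.norm_eq_abs] at h1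
        exact h1
      rcases le_or_gt (|t| * (M + d)) ‖z‖ with hA | hB
      · nlinarith [abs_nonneg t]
      · have ht : t ≠ 0 := by
          intro h0; rw [h0] at hB; simp at hB; linarith
        have heq : ‖J z - t • F‖ = |t| * ‖F - J (t⁻¹ • z)‖ := by
          rw [map_smul]
          have : J z - t • F = (-t) • (F - t⁻¹ • J z) := by
            ext φ
            simp only [ContinuousLinearMap.sub_apply, ContinuousLinearMap.smul_apply, smul_eq_mul]
            field_simp
            ring
          rw [this, (NormedSpace.toNormSMulClass (𝕜 := ℝ) (E := StrongDual ℝ (StrongDual ℝ X))).norm_smul, Real.norm_eq_abs, abs_neg]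
        have := hdist (t⁻¹ • z)
        have habs : 0 < |t| := abs_pos.2 ht
        rw [heq]
        nlinarith
    obtain ⟨Ψ, hΨn, hΨC, hΨy⟩ := normingFunctional (Submodule.span ℝ {F}) (J z)
      (r := θ * ‖z‖) (by positivity) hdC
    have hΨF : Ψ F = 0 := hΨC F (Submodule.mem_span_singleton_self F)
    obtain ⟨f, hfn, hfval⟩ := helly (E := StrongDual ℝ X) Ψ ({F, J z} : Finset _)
      (ε := 1 / (2 * (θ * ‖z‖))) (by positivity)
    have hfF : F f = 0 := by rw [hfval F (by simp), hΨF]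
    have hfz : f z = 1 := by
      have := hfval (J z) (by simp)
      rw [hΨy] at this
      exact this
    have hf0 : f ≠ 0 := by intro h0; rw [h0] at hfz; simp at hfz
    have hfnorm : 0 < ‖f‖ := norm_pos_iff.2 hf0
    have hfub : ‖f‖ < 2 / (θ * ‖z‖) := by
      have h1 : ‖f‖ ≤ ‖Ψ‖ + 1 / (2 * (θ * ‖z‖)) := hfn
      have h2 : ‖Ψ‖ ≤ 1 / (θ * ‖z‖) := hΨn
      have h3 : 1 / (θ * ‖z‖) + 1 / (2 * (θ * ‖z‖)) < 2 / (θ * ‖z‖) := by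
        have ha : (0:ℝ) < θ * ‖z‖ := by positivity
        have e1 : 1 / (θ * ‖z‖) + 1 / (2 * (θ * ‖z‖)) = (3/2) * (1 / (θ * ‖z‖)) := by
          field_simp; ring
        have e2 : 2 / (θ * ‖z‖) = 2 * (1 / (θ * ‖z‖)) := by ring
        rw [e1, e2]
        have h5 : (0:ℝ) < 1 / (θ * ‖z‖) := by positivity
        nlinarith
      linarith
    refine ⟨‖f‖⁻¹ • f, ?_, ?_, ?_⟩
    · rw [norm_smul, Real.norm_eq_abs, abs_of_pos (by positivity)]
      rw [inv_mul_cancel₀ (ne_of_gt hfnorm)]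
    · rw [map_smul, hfF, smul_zero]
    · simp only [ContinuousLinearMap.smul_apply, smul_eq_mul, hfz, mul_one]
      have h1 : (2 / (θ * ‖z‖))⁻¹ < ‖f‖⁻¹ := by
        apply inv_strictAnti₀ hfnorm hfub
      have h2 : (2 / (θ * ‖z‖))⁻¹ = θ / 2 * ‖z‖ := by
        rw [inv_div]; ring
      rw [h2] at h1
      exact h1
  -- Step 2: finite norming families from ker F
  have hGG : ∀ L : List X, ∃ G : Finset (StrongDual ℝ X),
      (∀ g ∈ G, ‖g‖ ≤ 1 ∧ F g = 0) ∧
      ∀ z ∈ Submodule.span ℝ {y : X | y ∈ L}, ∃ g ∈ G, θ / 2 * ‖z‖ ≤ g z := by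
    intro L
    set S := Submodule.span ℝ {y : X | y ∈ L} with hS
    haveI : FiniteDimensional ℝ ↥S := FiniteDimensional.span_of_finite ℝ (List.finite_toSet L)
    have hch : ∀ v : ↥S, ∃ g : StrongDual ℝ X, ‖g‖ ≤ 1 ∧ F g = 0 ∧
        ((v : X) ≠ 0 → θ / 2 * ‖(v : X)‖ < g (v : X)) := by
      intro v
      by_cases hv : (v : X) = 0
      · exact ⟨0, by simp, by simp, fun hc => absurd hv hc⟩
      · obtain ⟨g, h1, h2, h3⟩ := hker _ hv
        exact ⟨g, h1, h2, fun _ => h3⟩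
    choose gv hgv1 hgv2 hgv3 using hch
    set U : ↥S → Set ↥S := fun v => {u : ↥S | θ / 2 * ‖(u : X)‖ < gv v (u : X)} with hU
    have hUopen : ∀ v, IsOpen (U v) := by
      intro v
      have hcont : Continuous fun u : ↥S => gv v (u : X) - θ / 2 * ‖(u : X)‖ := by
        apply Continuous.sub
        · exact (gv v).continuous.comp continuous_subtype_val
        · exact continuous_const.mul (continuous_subtype_val.norm)
      have : U v = (fun u : ↥S => gv v (u : X) - θ / 2 * ‖(u : X)‖) ⁻¹' Set.Ioi 0 := by
        ext u; simp [hU, sub_pos]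
      rw [this]
      exact hcont.isOpen_preimage _ isOpen_Ioi
    have hcover : Metric.sphere (0 : ↥S) 1 ⊆ ⋃ v : ↥S, U v := by
      intro w hw
      have hwn : ‖w‖ = 1 := by simpa using hw
      have hwne : (w : X) ≠ 0 := by
        intro h0
        have : ‖w‖ = 0 := by
          rw [show ‖w‖ = ‖(w : X)‖ from rfl, h0, norm_zero]
        rw [hwn] at this; norm_num at this
      refine Set.mem_iUnion.2 ⟨w, ?_⟩
      exact hgv3 w hwne
    obtain ⟨t, ht⟩ := (isCompact_sphere (0 : ↥S) 1).elim_finite_subcover U hUopen hcover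
    refine ⟨insert 0 (t.image gv), ?_, ?_⟩
    · intro g hg
      rcases Finset.mem_insert.1 hg with rfl | hg'
      · simp
      · obtain ⟨v, -, rfl⟩ := Finset.mem_image.1 hg'
        exact ⟨hgv1 v, hgv2 v⟩
    · intro z hz
      by_cases hz0 : z = 0
      · exact ⟨0, Finset.mem_insert_self _ _, by simp [hz0]⟩
      · have hzn : (0:ℝ) < ‖z‖ := norm_pos_iff.2 hz0
        set w : ↥S := ⟨z, hz⟩ with hw
        set w1 : ↥S := ‖z‖⁻¹ • w with hw1
        have hw1mem : w1 ∈ Metric.sphere (0 : ↥S) 1 := by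
          have : ‖w1‖ = ‖z‖⁻¹ * ‖w‖ := by
            rw [hw1, norm_smul, Real.norm_eq_abs, abs_of_pos (by positivity)]
          have hwn : ‖w‖ = ‖z‖ := rfl
          simp only [Metric.mem_sphere, dist_zero_right]
          rw [this, hwn, inv_mul_cancel₀ (ne_of_gt hzn)]
        obtain ⟨v, hvt, hvU⟩ := Set.mem_iUnion₂.1 (ht hw1mem)
        have hlt : θ / 2 * ‖(w1 : X)‖ < gv v (w1 : X) := hvU
        have hcoe : (w1 : X) = ‖z‖⁻¹ • z := rfl
        rw [hcoe, norm_smul, Real.norm_eq_abs, abs_of_pos (by positivity), map_smul] at hlt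
        simp only [smul_eq_mul] at hlt
        refine ⟨gv v, Finset.mem_insert_of_mem (Finset.mem_image_of_mem gv hvt), ?_⟩
        have h2 : θ / 2 * (‖z‖⁻¹ * ‖z‖) * ‖z‖ ≤ ‖z‖⁻¹ * gv v z * ‖z‖ := by
          nlinarith
        rw [inv_mul_cancel₀ (ne_of_gt hzn)] at h2
        calc θ / 2 * ‖z‖ = θ / 2 * 1 * ‖z‖ := by ring
          _ ≤ ‖z‖⁻¹ * gv v z * ‖z‖ := h2
          _ = gv v z * (‖z‖⁻¹ * ‖z‖) := by ring
          _ = gv v z := by rw [inv_mul_cancel₀ (ne_of_gt hzn), mul_one]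
  -- Step 3: the f-functionals
  have hFF : ∀ L : List X, ∃ f : StrongDual ℝ X, ‖f‖ ≤ 1 / d + 1 ∧ F f = 1 ∧ ∀ y ∈ L, f y = 0 := by
    intro L
    set C : Submodule ℝ (StrongDual ℝ (StrongDual ℝ X)) :=
      Submodule.span ℝ ((J : X → StrongDual ℝ (StrongDual ℝ X)) '' {y : X | y ∈ L}) with hC
    have hdC : ∀ c ∈ C, d ≤ ‖F - c‖ := by
      intro c hc
      rw [hC, show (J : X → StrongDual ℝ (StrongDual ℝ X)) = ((J : X →ₗ[ℝ] StrongDual ℝ (StrongDual ℝ X)) : X → StrongDual ℝ (StrongDual ℝ X)) from rfl, Submodule.span_image] at hc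
      obtain ⟨y, -, rfl⟩ := Submodule.mem_map.1 hc
      exact hdist y
    obtain ⟨Φ, hΦn, hΦC, hΦF⟩ := normingFunctional C F hd0 hdC
    obtain ⟨f, hfn, hfval⟩ := helly (E := StrongDual ℝ X) Φ
      (insert F (L.toFinset.image (fun y => J y))) one_pos
    refine ⟨f, ?_, ?_, ?_⟩
    · calc ‖f‖ ≤ ‖Φ‖ + 1 := hfn
        _ ≤ 1 / d + 1 := by linarith
    · rw [hfval F (Finset.mem_insert_self _ _), hΦF]
    · intro y hy
      have hmem : (J y : StrongDual ℝ (StrongDual ℝ X)) ∈ insert F (L.toFinset.image (fun y => J y)) := by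
        apply Finset.mem_insert_of_mem
        exact Finset.mem_image_of_mem _ (List.mem_toFinset.2 hy)
      have := hfval (J y) hmem
      have hJy0 : Φ (J y) = 0 := by
        apply hΦC
        exact Submodule.subset_span ⟨y, hy, rfl⟩
      rw [hJy0] at this
      exact this
  -- Step 4: the x-choices via Helly
  have hxstepE : ∀ s : Finset (StrongDual ℝ X), ∃ x : X, ‖x‖ ≤ M + 1 ∧ ∀ φ ∈ s, φ x = F φ := by
    intro s
    obtain ⟨x, h1, h2⟩ := helly (E := X) F s one_pos
    exact ⟨x, h1, h2⟩
  choose FFf hFF1 hFF2 hFF3 using hFF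
  choose GGf hGG1 hGG2 using hGG
  choose xst hxst1 hxst2 using hxstepE
  set cons : List X → Finset (StrongDual ℝ X) := fun L =>
    (Finset.range (L.length + 1)).biUnion
      (fun k => insert (FFf (L.take k)) (GGf (L.take k))) with hcons
  set xstep : List X → X := fun L => xst (cons L) with hxstepdef
  set xh : ℕ → List X := fun n => Nat.rec [] (fun _ ih => ih ++ [xstep ih]) n with hxh
  set x : ℕ → X := fun n => xstep (xh n) with hxdef
  set f : ℕ → StrongDual ℝ X := fun n => FFf (xh n) with hfdef
  have hxhsucc : ∀ n, xh (n + 1) = xh n ++ [x n] := fun n => rfl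
  have hxhlen : ∀ n, (xh n).length = n := by
    intro n
    induction n with
    | zero => rfl
    | succ n ih => rw [hxhsucc, List.length_append, ih]; rfl
  have htake : ∀ m n, m ≤ n → (xh n).take m = xh m := by
    intro m n h
    induction n with
    | zero => 
      have : m = 0 := Nat.le_zero.1 h
      subst this; rfl
    | succ n ih =>
      rcases Nat.lt_or_ge m (n+1) with h' | h'
      · rw [hxhsucc, List.take_append_of_le_length (by rw [hxhlen]; omega)]
        exact ih (by omega)
      · have hmeq : m = n + 1 := by omega
        subst hmeq
        exact List.take_of_length_le (le_of_eq (hxhlen (n+1)))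
  have hmemxh : ∀ n yv, yv ∈ xh n ↔ ∃ i, i < n ∧ x i = yv := by
    intro n
    induction n with
    | zero => intro yv; simp [hxh]
    | succ n ih =>
      intro yv
      rw [hxhsucc, List.mem_append, List.mem_singleton, ih yv]
      constructor
      · rintro (⟨i, hi, rfl⟩ | rfl)
        · exact ⟨i, by omega, rfl⟩
        · exact ⟨n, by omega, rfl⟩
      · rintro ⟨i, hi, rfl⟩
        rcases Nat.lt_succ_iff_lt_or_eq.1 hi with h' | rfl
        · exact Or.inl ⟨i, h', rfl⟩
        · exact Or.inr rfl
  have hfcons : ∀ k n, k ≤ n → f k ∈ cons (xh n) := by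
    intro k n hkn
    rw [hcons]
    apply Finset.mem_biUnion.2
    refine ⟨k, Finset.mem_range.2 (by rw [hxhlen]; omega), ?_⟩
    rw [htake k n hkn]
    exact Finset.mem_insert_self _ _
  have hgcons : ∀ k n, k ≤ n → ∀ g ∈ GGf (xh k), g ∈ cons (xh n) := by
    intro k n hkn g hg
    rw [hcons]
    apply Finset.mem_biUnion.2
    refine ⟨k, Finset.mem_range.2 (by rw [hxhlen]; omega), ?_⟩
    rw [htake k n hkn]
    exact Finset.mem_insert_of_mem hg
  have hfx1 : ∀ k n, k ≤ n → f k (x n) = 1 := by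
    intro k n hkn
    have := hxst2 (cons (xh n)) (f k) (hfcons k n hkn)
    rw [this, hfdef]
    exact hFF2 (xh k)
  have hgx0 : ∀ k n, k ≤ n → ∀ g ∈ GGf (xh k), g (x n) = 0 := by
    intro k n hkn g hg
    have := hxst2 (cons (xh n)) g (hgcons k n hkn g hg)
    rw [this]
    exact (hGG1 (xh k) g hg).2
  have hfx0 : ∀ k n, n < k → f k (x n) = 0 := by
    intro k n hnk
    exact hFF3 (xh k) (x n) ((hmemxh k (x n)).2 ⟨n, hnk, rfl⟩)
  have hCf : (0:ℝ) < 1 / d + 1 := by positivity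
  have hfnorm : ∀ k, ‖f k‖ ≤ 1 / d + 1 := fun k => hFF1 (xh k)
  have hxnorm : ∀ n, ‖x n‖ ≤ M + 1 := fun n => hxst1 (cons (xh n))
  -- basic sequence
  have hbasic : IsBasicSeq x := by
    constructor
    · intro n h0
      have := hfx1 n n le_rfl
      rw [h0, map_zero] at this
      norm_num at this
    · refine ⟨2 / θ, ?_, ?_⟩
      · rw [le_div_iff₀ hθ]; linarith
      · intro a m n hmn
        by_cases hPm : PartialSum x a m = 0
        · rw [hPm, norm_zero]
          positivity
        · have hPmS : PartialSum x a m ∈ Submodule.span ℝ {y : X | y ∈ xh m} := by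
            apply Submodule.sum_mem
            intro i hi
            apply Submodule.smul_mem
            apply Submodule.subset_span
            exact (hmemxh m (x i)).2 ⟨i, Finset.mem_range.1 hi, rfl⟩
          obtain ⟨g, hgmem, hgz⟩ := hGG2 (xh m) _ hPmS
          have hg1 : ‖g‖ ≤ 1 := (hGG1 (xh m) g hgmem).1
          have hsplit : PartialSum x a m + ∑ i ∈ Finset.Ico m n, a i • x i
              = PartialSum x a n := Finset.sum_range_add_sum_Ico _ hmn
          have hgPn : g (PartialSum x a n) = g (PartialSum x a m) := by
            rw [← hsplit, map_add, map_sum]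
            have : ∀ i ∈ Finset.Ico m n, g (a i • x i) = 0 := by
              intro i hi
              rw [map_smul, hgx0 m i (Finset.mem_Ico.1 hi).1 g hgmem, smul_zero]
            rw [Finset.sum_congr rfl this, Finset.sum_const_zero, add_zero]
          have hchain : θ / 2 * ‖PartialSum x a m‖ ≤ ‖PartialSum x a n‖ := by
            calc θ / 2 * ‖PartialSum x a m‖ ≤ g (PartialSum x a m) := hgz
              _ = g (PartialSum x a n) := hgPn.symm
              _ ≤ |g (PartialSum x a n)| := le_abs_self _
              _ ≤ ‖g‖ * ‖PartialSum x a n‖ := by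
                  have := (g).le_opNorm (PartialSum x a n)
                  rwa [Real.norm_eq_abs] at this
              _ ≤ 1 * ‖PartialSum x a n‖ := by
                  apply mul_le_mul_of_nonneg_right hg1 (norm_nonneg _)
              _ = ‖PartialSum x a n‖ := one_mul _
          calc ‖PartialSum x a m‖ = 2 / θ * (θ / 2 * ‖PartialSum x a m‖) := by
                field_simp <;> ring
            _ ≤ 2 / θ * ‖PartialSum x a n‖ := by
                apply mul_le_mul_of_nonneg_left hchain (by positivity)
  -- semi-normalized
  have hsemi : SemiNormalized x := by
    refine ⟨(1 / d + 1)⁻¹, M + 1, by positivity, ?_⟩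
    intro n
    constructor
    · have h1 : (1:ℝ) ≤ (1 / d + 1) * ‖x n‖ := by
        calc (1:ℝ) = f n (x n) := (hfx1 n n le_rfl).symm
          _ ≤ |f n (x n)| := le_abs_self _
          _ ≤ ‖f n‖ * ‖x n‖ := by
              have := (f n).le_opNorm (x n)
              rwa [Real.norm_eq_abs] at this
          _ ≤ (1 / d + 1) * ‖x n‖ := by
              apply mul_le_mul_of_nonneg_right (hfnorm n) (norm_nonneg _)
      rw [inv_le_iff_one_le_mul₀ hCf]
      linarith
    · exact hxnorm n
  exact ⟨x, f, 1 / d + 1, hCf, hbasic, hsemi, hfnorm, hfx1, hfx0⟩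

/-- No subsequence of a triangular system spans a reflexive subspace. -/
theorem no_reflexive_span {X : Type*} [NormedAddCommGroup X] [NormedSpace ℝ X]
    (x : ℕ → X) (f : ℕ → StrongDual ℝ X) (Cf B : ℝ) (hCf : 0 < Cf)
    (hf : ∀ k, ‖f k‖ ≤ Cf) (hxb : ∀ n, ‖x n‖ ≤ B)
    (h1 : ∀ k n, k ≤ n → f k (x n) = 1) (h0 : ∀ k n, n < k → f k (x n) = 0)
    (σ : ℕ → ℕ) (hσ : StrictMono σ)
    (hrefl : BanachReflexive ↥(closedSpan (x ∘ σ))) : False := by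
  classical
  set Z := closedSpan (x ∘ σ) with hZ
  have hmemZ : ∀ n, x (σ n) ∈ Z := by
    intro n
    apply Submodule.le_topologicalClosure
    exact Submodule.subset_span ⟨n, rfl⟩
  set y : ℕ → ↥Z := fun n => ⟨x (σ n), hmemZ n⟩ with hy
  set hk : ℕ → StrongDual ℝ ↥Z := fun k => (f (σ k)).comp Z.subtypeL with hhk
  have hknorm : ∀ k, ‖hk k‖ ≤ Cf := by
    intro k
    apply ContinuousLinearMap.opNorm_le_bound _ (le_of_lt hCf)
    intro v
    calc ‖(hk k) v‖ = ‖f (σ k) (v : X)‖ := rfl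
      _ ≤ ‖f (σ k)‖ * ‖(v : X)‖ := (f (σ k)).le_opNorm _
      _ ≤ Cf * ‖v‖ := by
          apply mul_le_mul_of_nonneg_right (hf (σ k)) (norm_nonneg _)
  have hky1 : ∀ k n, k ≤ n → hk k (y n) = 1 := by
    intro k n hkn
    have : hk k (y n) = f (σ k) (x (σ n)) := rfl
    rw [this]
    exact h1 _ _ (hσ.le_iff_le.2 hkn)
  -- Alaoglu
  set u : ℕ → WeakDual ℝ (StrongDual ℝ ↥Z) := fun n => inclusionInDoubleDual ℝ ↥Z (y n) with hu
  have hub : ∀ n, ‖inclusionInDoubleDual ℝ ↥Z (y n)‖ ≤ B := by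
    intro n
    calc ‖inclusionInDoubleDual ℝ ↥Z (y n)‖ ≤ ‖y n‖ := NormedSpace.double_dual_bound ℝ ↥Z (y n)
      _ = ‖x (σ n)‖ := rfl
      _ ≤ B := hxb _
  have hcomp := WeakDual.isCompact_closedBall (𝕜 := ℝ) (E := StrongDual ℝ ↥Z) 0 B
  obtain ⟨G₀, hG₀mem, hG₀⟩ := hcomp.exists_clusterPt (f := Filter.map u Filter.atTop) (by
    rw [Filter.le_principal_iff, Filter.mem_map]
    exact Filter.Eventually.of_forall fun n => by
      simp only [Set.mem_preimage, Metric.mem_closedBall, dist_zero_right]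
      exact hub n)
  have hGval : ∀ k, G₀ (hk k) = 1 := by
    intro k
    have hcont : Continuous fun G : WeakDual ℝ (StrongDual ℝ ↥Z) => G (hk k) :=
      WeakDual.eval_continuous (hk k)
    have hcl2 : ClusterPt (G₀ (hk k))
        (Filter.map (fun G : WeakDual ℝ (StrongDual ℝ ↥Z) => G (hk k)) (Filter.map u Filter.atTop)) :=
      (hG₀.map hcont.continuousAt) Filter.tendsto_map
    rw [Filter.map_map] at hcl2
    have htend : Filter.Tendsto (fun n => u n (hk k)) Filter.atTop (nhds 1) := by
      apply Filter.Tendsto.congr' _ tendsto_const_nhds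
      filter_upwards [Filter.eventually_ge_atTop k] with n hn
      have : u n (hk k) = hk k (y n) := rfl
      rw [this, hky1 k n hn]
    have hne : Filter.NeBot (nhds (G₀ (hk k)) ⊓ nhds 1) := by
      apply Filter.NeBot.mono hcl2
      exact inf_le_inf_left _ htend
    exact eq_of_nhds_neBot hne
  obtain ⟨w, hw⟩ := hrefl (WeakDual.toStrongDual G₀)
  have hwk : ∀ k, f (σ k) (w : X) = 1 := by
    intro k
    have h1' : (inclusionInDoubleDual ℝ ↥Z w) (hk k) = G₀ (hk k) := by rw [hw]; rfl
    have h2' : (inclusionInDoubleDual ℝ ↥Z w) (hk k) = f (σ k) (w : X) := rfl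
    rw [h2', hGval k] at h1'
    exact h1'
  -- density contradiction
  have hwZ : (w : X) ∈ closure ((Submodule.span ℝ (Set.range (x ∘ σ)) : Submodule ℝ X) : Set X) := by
    rw [← Submodule.topologicalClosure_coe]
    exact w.2
  have hεq : (0:ℝ) < (2 * Cf)⁻¹ := by positivity
  obtain ⟨z, hzmem, hzclose⟩ := Metric.mem_closure_iff.1 hwZ _ hεq
  obtain ⟨cz, hcz⟩ := Finsupp.mem_span_range_iff_exists_finsupp.1 hzmem
  set N := cz.support.sup id with hN
  have hfz : f (σ (N + 1)) z = 0 := by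
    rw [← hcz, map_finsuppSum]
    apply Finset.sum_eq_zero
    intro i hi
    have hiN : i ≤ N := Finset.le_sup (f := id) hi
    have : σ i < σ (N + 1) := hσ (by omega)
    show f (σ (N + 1)) (cz i • (x ∘ σ) i) = 0
    rw [map_smul]
    have hz0 : f (σ (N + 1)) ((x ∘ σ) i) = 0 := h0 _ _ this
    rw [hz0, smul_zero]
  have hbound : |f (σ (N + 1)) ((w : X) - z)| ≤ Cf * (2 * Cf)⁻¹ := by
    calc |f (σ (N + 1)) ((w : X) - z)| ≤ ‖f (σ (N + 1))‖ * ‖(w : X) - z‖ := by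
          have := (f (σ (N + 1))).le_opNorm ((w : X) - z)
          rwa [Real.norm_eq_abs] at this
      _ ≤ Cf * (2 * Cf)⁻¹ := by
          apply mul_le_mul (hf _) _ (norm_nonneg _) (le_of_lt hCf)
          rw [← dist_eq_norm]
          exact le_of_lt hzclose
  have hcalc : f (σ (N + 1)) ((w : X) - z) = 1 := by
    rw [map_sub, hwk (N + 1), hfz, sub_zero]
  rw [hcalc] at hbound
  have : Cf * (2 * Cf)⁻¹ = 1 / 2 := by field_simp
  rw [this] at hbound
  norm_num at hbound

end Aux

/-- if every semi-normalized basic sequence in `X` has a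
subsequence spanning a reflexive subspace, then `X` is reflexive. -/
theorem stmt9 {X : Type*} [NormedAddCommGroup X] [NormedSpace ℝ X] [CompleteSpace X]
    (h : ∀ x : ℕ → X, IsBasicSeq x → SemiNormalized x →
      ∃ σ : ℕ → ℕ, StrictMono σ ∧ BanachReflexive ↥(closedSpan (x ∘ σ))) :
    BanachReflexive X := by
  classical
  by_contra hns
  have hex : ∃ F, F ∉ Set.range (inclusionInDoubleDual ℝ X) := by
    by_contra hall
    push_neg at hall
    exact hns fun F => hall F
  obtain ⟨F, hFr⟩ := hex
  obtain ⟨x, f, Cf, hCf, hbasic, hsemi, hfn, h1, h0⟩ := exists_bad_seq F hFr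
  obtain ⟨σ, hσ, hrefl⟩ := h x hbasic hsemi
  obtain ⟨c0, C0, hc0, hb⟩ := hsemi
  exact no_reflexive_span x f Cf C0 hCf hfn (fun n => (hb n).2) h1 h0 σ hσ hrefl

end
end

section
/- Let {e_n} be a strongly summing basic sequence spanning a space whose difference sequence {v_n} is a shrinking basis of [e_n] with coordinate functionals {v_n*}. Define e_n* = v_n* - v_{n+1}*. Then {e_n*} is the sequence of coordinate functionals associated to {e_n}, and the closed span [e_n*] has codimension 1 in [e_n]* = [v_n*]; indeed [e_n]* = [e_n*] ⊕ span{v_1*}. -/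
open Filter Finset NormedSpace

noncomputable section

variable {X : Type*} [NormedAddCommGroup X] [NormedSpace ℝ X]

set_option maxHeartbeats 2000000 in
/-- if `{e n}` is a strongly summing basic sequence spanning `X`
whose difference sequence is a shrinking basis of `X` with coordinate
functionals `g`, then `e* n := g n - g (n+1)` are the coordinate functionals of
`{e n}`, the dual is spanned by `{g n}`, and the closed span of `{e* n}` has
codimension one: `X* = [e* n] ⊕ span{g 0}`. -/
theorem stmt10 {X : Type*} [NormedAddCommGroup X] [NormedSpace ℝ X] [CompleteSpace X]
    (e : ℕ → X) (hb : IsBasicSeq e) (hss : StronglySumming e)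
    (hspan : closedSpan e = ⊤)
    (g : ℕ → X →L[ℝ] ℝ) (hgbasis : IsSchauderBasis (diffSeq e) g)
    (hshr : Shrinking (diffSeq e))
    (estar : ℕ → X →L[ℝ] ℝ) (hestar : ∀ n, estar n = g n - g (n+1)) :
    (∀ n m, estar n (e m) = if n = m then 1 else 0) ∧
    closedSpan g = (⊤ : Submodule ℝ (StrongDual ℝ X)) ∧
    IsCompl (closedSpan estar) (Submodule.span ℝ {g 0}) ∧
    Module.finrank ℝ ((StrongDual ℝ X) ⧸ closedSpan estar) = 1 := by
  set v : ℕ → X := diffSeq e with hv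
  -- telescoping sums of v
  have hsum : ∀ m, ∑ i ∈ range (m+1), v i = e m := by
    intro m
    induction m with
    | zero => simp [hv, diffSeq]
    | succ m ih => rw [Finset.sum_range_succ, ih]; simp [hv, diffSeq]
  have hgv : ∀ n m, g n (v m) = if n = m then 1 else 0 := hgbasis.1
  have hge : ∀ n m, g n (e m) = if n ≤ m then 1 else 0 := by
    intro n m
    rw [← hsum m, map_sum]
    rw [Finset.sum_congr rfl (fun i _ => hgv n i), Finset.sum_ite_eq]
    simp [Nat.lt_succ_iff]
  have part1 : ∀ n m, estar n (e m) = if n = m then 1 else 0 := by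
    intro n m
    rw [hestar]
    simp only [ContinuousLinearMap.sub_apply, hge]
    rcases lt_trichotomy n m with h | h | h
    · rw [if_pos h.le, if_pos (Nat.succ_le_of_lt h), if_neg h.ne, sub_self]
    · subst h; simp
    · rw [if_neg (by omega), if_neg (by omega), if_neg (by omega), sub_self]
  -- partial sum projections
  set P : ℕ → X →L[ℝ] X := fun n => ∑ i ∈ range n, (g i).smulRight (v i) with hP
  have hPapp : ∀ n x, P n x = ∑ i ∈ range n, g i x • v i := by
    intro n x
    simp [hP, ContinuousLinearMap.sum_apply]
  have hPx : ∀ x, Tendsto (fun n => P n x) atTop (nhds x) := by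
    intro x
    have := hgbasis.2 x
    simpa [hPapp] using this
  obtain ⟨C, hC⟩ : ∃ C, ∀ n, ‖P n‖ ≤ C := by
    apply banach_steinhaus
    intro x
    have := (hPx x).norm.bddAbove_range
    obtain ⟨M, hM⟩ := this
    exact ⟨M, fun n => hM ⟨n, rfl⟩⟩
  have hC0 : 0 ≤ C := le_trans (norm_nonneg _) (hC 0)
  -- main convergence: partial expansions of f converge to f in the dual norm
  have hQ : ∀ f : StrongDual ℝ X, Tendsto (fun n => ∑ i ∈ range n, f (v i) • g i)
      atTop (nhds f) := by
    intro f
    rw [NormedAddCommGroup.tendsto_atTop]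
    intro δ hδ
    have hε : 0 < δ / (2 * (1 + C)) := by positivity
    obtain ⟨N, hN⟩ := hshr f _ hε
    refine ⟨N, fun n hn => ?_⟩
    have key : ∀ y ∈ tailSpan v n, |f y| ≤ δ / (2 * (1 + C)) * ‖y‖ := by
      intro y hy
      rcases eq_or_ne y 0 with rfl | hy0
      · simp
      · have h1 : ‖(‖y‖⁻¹ • y : X)‖ ≤ 1 := by
          rw [norm_smul, norm_inv, norm_norm]
          rw [inv_mul_cancel₀ (norm_ne_zero_iff.2 hy0)]
        have h2 := hN n hn _ (Submodule.smul_mem _ (‖y‖⁻¹) hy) h1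
        rw [map_smul, smul_eq_mul, abs_mul, abs_inv, abs_norm] at h2
        calc |f y| = ‖y‖ * (‖y‖⁻¹ * |f y|) := by
              rw [← mul_assoc, mul_inv_cancel₀ (norm_ne_zero_iff.2 hy0), one_mul]
          _ ≤ ‖y‖ * (δ / (2 * (1 + C))) := by
              apply mul_le_mul_of_nonneg_left h2 (norm_nonneg _)
          _ = δ / (2 * (1 + C)) * ‖y‖ := mul_comm _ _
    have hbound : ‖(∑ i ∈ range n, f (v i) • g i) - f‖ ≤ δ / (2 * (1 + C)) * (1 + C) := by
      rw [← norm_neg, neg_sub]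
      apply ContinuousLinearMap.opNorm_le_bound _ (by positivity)
      intro x
      have heval : (f - ∑ i ∈ range n, f (v i) • g i) x = f (x - P n x) := by
        rw [map_sub, hPapp, map_sum]
        simp only [ContinuousLinearMap.sub_apply, ContinuousLinearMap.sum_apply,
          ContinuousLinearMap.coe_smul', Pi.smul_apply, smul_eq_mul, map_smul]
        congr 1
        exact Finset.sum_congr rfl fun i _ => mul_comm _ _
      -- x - P n x ∈ tailSpan v n
      have hmem : x - P n x ∈ tailSpan v n := by
        have htd : Tendsto (fun m => P m x - P n x) atTop (nhds (x - P n x)) :=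
          (hPx x).sub tendsto_const_nhds
        have hev : ∀ᶠ m in atTop, P m x - P n x ∈
            (Submodule.span ℝ {y | ∃ k, n ≤ k ∧ y = v k} : Set X) := by
          filter_upwards [eventually_ge_atTop n] with m hm
          have : P m x - P n x = ∑ i ∈ Finset.Ico n m, g i x • v i := by
            rw [hPapp, hPapp, ← Finset.sum_Ico_eq_sub _ hm]
          rw [this]
          exact Submodule.sum_mem _ fun i hi => Submodule.smul_mem _ _
            (Submodule.subset_span ⟨i, (Finset.mem_Ico.1 hi).1, rfl⟩)
        rw [tailSpan, ← SetLike.mem_coe, Submodule.topologicalClosure_coe]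
        exact mem_closure_of_tendsto htd hev
      have hnorm : ‖x - P n x‖ ≤ (1 + C) * ‖x‖ := by
        calc ‖x - P n x‖ ≤ ‖x‖ + ‖P n x‖ := norm_sub_le _ _
          _ ≤ ‖x‖ + C * ‖x‖ := by
              gcongr
              exact (P n).le_of_opNorm_le (hC n) x
          _ = (1 + C) * ‖x‖ := by ring
      calc ‖(f - ∑ i ∈ range n, f (v i) • g i) x‖ = |f (x - P n x)| := by
            rw [heval]; rfl
        _ ≤ δ / (2 * (1 + C)) * ‖x - P n x‖ := key _ hmem
        _ ≤ δ / (2 * (1 + C)) * ((1 + C) * ‖x‖) := by gcongr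
        _ = δ / (2 * (1 + C)) * (1 + C) * ‖x‖ := by ring
    have : δ / (2 * (1 + C)) * (1 + C) = δ / 2 := by
      field_simp
    rw [this] at hbound
    exact lt_of_le_of_lt hbound (by linarith)
  clear_value P v
  clear hP hPapp hPx hv hb hspan
  -- Part 2: the g n span the dual
  have part2 : closedSpan g = (⊤ : Submodule ℝ (StrongDual ℝ X)) := by
    rw [eq_top_iff]
    intro f _
    rw [closedSpan, ← SetLike.mem_coe, Submodule.topologicalClosure_coe]
    refine mem_closure_of_tendsto (hQ f) (Eventually.of_forall fun n => ?_)
    exact Submodule.sum_mem _ fun i _ => Submodule.smul_mem _ _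
      (Submodule.subset_span ⟨i, rfl⟩)
  -- uniform bound on the e n
  obtain ⟨M, hM0, hM⟩ : ∃ M : ℝ, 0 ≤ M ∧ ∀ n, ‖e n‖ ≤ M := by
    obtain ⟨C', hC'⟩ : ∃ C', ∀ n, ‖inclusionInDoubleDual ℝ X (e n)‖ ≤ C' := by
      apply banach_steinhaus
      intro f
      obtain ⟨l, hl⟩ := hss.1 f
      obtain ⟨M, hM⟩ := hl.norm.bddAbove_range
      exact ⟨M, fun n => by
        simpa [NormedSpace.dual_def] using hM ⟨n, rfl⟩⟩
    refine ⟨max C' 0, le_max_right _ _, fun n => ?_⟩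
    apply NormedSpace.norm_le_dual_bound ℝ (e n) (le_max_right _ _)
    intro f
    calc ‖f (e n)‖ = ‖inclusionInDoubleDual ℝ X (e n) f‖ := by
          rw [NormedSpace.dual_def]
      _ ≤ ‖inclusionInDoubleDual ℝ X (e n)‖ * ‖f‖ :=
          ContinuousLinearMap.le_opNorm _ _
      _ ≤ max C' 0 * ‖f‖ := by
          gcongr
          exact le_trans (hC' n) (le_max_left _ _)
  -- the limit functional Φ
  obtain ⟨Φ, hΦtendsto⟩ : ∃ Φ : StrongDual ℝ X →L[ℝ] ℝ,
      ∀ f : StrongDual ℝ X, Tendsto (fun n => f (e n)) atTop (nhds (Φ f)) := by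
    have hL : ∀ f : StrongDual ℝ X, ∃ l : ℝ, Tendsto (fun n => f (e n)) atTop (nhds l) := hss.1
    set L : StrongDual ℝ X → ℝ := fun f => (hL f).choose with hLdef
    have hL' : ∀ f, Tendsto (fun n => f (e n)) atTop (nhds (L f)) :=
      fun f => (hL f).choose_spec
    refine ⟨LinearMap.mkContinuous
      { toFun := L
        map_add' := by
          intro f h
          exact tendsto_nhds_unique (hL' (f + h)) (by simpa using (hL' f).add (hL' h))
        map_smul' := by
          intro c f
          exact tendsto_nhds_unique (hL' (c • f))
            (by simpa using (hL' f).const_mul c) } M ?_, hL'⟩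
    intro f
    have h1 : Tendsto (fun n => |f (e n)|) atTop (nhds |L f|) := (hL' f).abs
    have h2 : ∀ n, |f (e n)| ≤ M * ‖f‖ := by
      intro n
      calc |f (e n)| ≤ ‖f‖ * ‖e n‖ := f.le_opNorm (e n)
        _ ≤ ‖f‖ * M := by gcongr; exact hM n
        _ = M * ‖f‖ := mul_comm _ _
    exact le_of_tendsto h1 (Eventually.of_forall h2)
  have hΦg0 : Φ (g 0) = 1 := by
    refine tendsto_nhds_unique (hΦtendsto (g 0)) ?_
    have h1 : (fun n : ℕ => g 0 (e n)) = fun _ => (1 : ℝ) := by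
      funext n; rw [hge]; simp
    rw [h1]
    exact tendsto_const_nhds
  have hΦestar : ∀ n, Φ (estar n) = 0 := by
    intro n
    refine tendsto_nhds_unique (hΦtendsto (estar n)) ?_
    have h1 : (fun m : ℕ => estar n (e m)) =ᶠ[atTop] (fun _ => (0 : ℝ)) := by
      filter_upwards [eventually_ge_atTop (n+1)] with m hm
      rw [part1, if_neg (by omega)]
    rw [tendsto_congr' h1]
    exact tendsto_const_nhds
  have hΦspan : closedSpan estar ≤ LinearMap.ker (Φ : StrongDual ℝ X →ₗ[ℝ] ℝ) := by
    apply Submodule.topologicalClosure_minimal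
    · rw [Submodule.span_le]
      rintro _ ⟨n, rfl⟩
      exact LinearMap.mem_ker.2 (hΦestar n)
    · exact ContinuousLinearMap.isClosed_ker Φ
  -- partial coefficient sums tend to Φ f
  have hS : ∀ f : StrongDual ℝ X, Tendsto (fun n => ∑ i ∈ range n, f (v i)) atTop (nhds (Φ f)) := by
    intro f
    apply (tendsto_add_atTop_iff_nat 1).mp
    have : (fun n => ∑ i ∈ range (n + 1), f (v i)) = fun n => f (e n) := by
      funext n
      rw [← map_sum, hsum]
    rw [this]
    exact hΦtendsto f
  -- Abel summation identity
  have hAbel : ∀ (f : StrongDual ℝ X) (n : ℕ), ∑ i ∈ range n, f (v i) • g i =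
      (∑ i ∈ range n, f (e i) • estar i) + (∑ i ∈ range n, f (v i)) • g n := by
    intro f n
    induction n with
    | zero => simp
    | succ n ih =>
      rw [Finset.sum_range_succ, ih, Finset.sum_range_succ, Finset.sum_range_succ]
      have hfe : f (e n) = (∑ i ∈ range n, f (v i)) + f (v n) := by
        rw [← hsum n, map_sum, Finset.sum_range_succ]
      rw [hestar, hfe]
      module
  -- telescoping for estar
  have htel : ∀ n, ∑ i ∈ range n, estar i = g 0 - g n := by
    intro n
    calc ∑ i ∈ range n, estar i = ∑ i ∈ range n, (g i - g (i+1)) :=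
          Finset.sum_congr rfl fun i _ => hestar i
      _ = g 0 - g n := Finset.sum_range_sub' g n
  -- decomposition: f - Φ f • g 0 lies in the closed span of estar
  have hdecomp : ∀ f : StrongDual ℝ X, f - Φ f • g 0 ∈ closedSpan estar := by
    intro f
    rw [closedSpan, ← SetLike.mem_coe, Submodule.topologicalClosure_coe]
    have htd : Tendsto (fun n => (∑ i ∈ range n, f (v i) • g i)
        - (∑ i ∈ range n, f (v i)) • g 0) atTop (nhds (f - Φ f • g 0)) :=
      (hQ f).sub ((hS f).smul_const (g 0))
    refine mem_closure_of_tendsto htd (Eventually.of_forall fun n => ?_)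
    have hgrew : (∑ i ∈ range n, f (v i) • g i) - (∑ i ∈ range n, f (v i)) • g 0 =
        (∑ i ∈ range n, f (e i) • estar i)
          - (∑ i ∈ range n, f (v i)) • (∑ i ∈ range n, estar i) := by
      rw [hAbel f n, htel n, smul_sub]
      abel
    rw [hgrew]
    refine Submodule.sub_mem _ ?_ ?_
    · exact Submodule.sum_mem _ fun i _ => Submodule.smul_mem _ _
        (Submodule.subset_span ⟨i, rfl⟩)
    · exact Submodule.smul_mem _ _ (Submodule.sum_mem _ fun i _ =>
        Submodule.subset_span ⟨i, rfl⟩)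
  -- IsCompl
  have hcompl : IsCompl (closedSpan estar) (Submodule.span ℝ {g 0}) := by
    constructor
    · rw [disjoint_iff_inf_le]
      rintro x ⟨hx1, hx2⟩
      obtain ⟨a, rfl⟩ := Submodule.mem_span_singleton.1 hx2
      have h0 : Φ (a • g 0) = 0 := hΦspan hx1
      rw [map_smul, hΦg0, smul_eq_mul, mul_one] at h0
      simp [h0]
    · rw [codisjoint_iff, eq_top_iff]
      intro f _
      have : f = (f - Φ f • g 0) + Φ f • g 0 := by abel
      rw [this]
      exact Submodule.add_mem _
        (Submodule.mem_sup_left (hdecomp f))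
        (Submodule.mem_sup_right (Submodule.smul_mem _ _ (Submodule.mem_span_singleton_self _)))
  -- finrank of the quotient
  have hg0ne : g 0 ≠ 0 := by
    intro h
    have := hge 0 0
    rw [h] at this
    simp at this
  have part4 : Module.finrank ℝ ((StrongDual ℝ X) ⧸ closedSpan estar) = 1 := by
    rw [(Submodule.quotientEquivOfIsCompl _ _ hcompl).finrank_eq]
    exact finrank_span_singleton hg0ne
  exact ⟨part1, part2, hcompl, part4⟩

end
end

section
/- Let {e_n} be a basic sequence and {v_n} a sequence in a Banach space with ∑_n ‖e_n - v_n‖ < ∞ sufficiently small relative to the basis constant and lower bound of {e_n} (e.g., ∑ ‖e_n - v_n‖ < 1/(2K) where K is determined by the basis constant and inf ‖e_n‖). If {e_n} is boundedly complete, then {v_n} is a boundedly complete basic sequence equivalent to {e_n}. -/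
open Filter Finset NormedSpace

noncomputable section

variable {X : Type*} [NormedAddCommGroup X] [NormedSpace ℝ X]

lemma aux_coeff_bound {X : Type*} [NormedAddCommGroup X] [NormedSpace ℝ X]
    (e : ℕ → X) (K c : ℝ) (hc : 0 < c)
    (hbasis : ∀ (a : ℕ → ℝ) (m n : ℕ), m ≤ n →
      ‖PartialSum e a m‖ ≤ K * ‖PartialSum e a n‖)
    (hlow : ∀ n, c ≤ ‖e n‖) (a : ℕ → ℝ) {i n : ℕ} (hin : i < n) :
    |a i| ≤ 2 * K / c * ‖PartialSum e a n‖ := by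
  have hstep : a i • e i = PartialSum e a (i + 1) - PartialSum e a i := by
    simp [PartialSum, Finset.sum_range_succ]
  have h1 : c * |a i| ≤ ‖a i • e i‖ := by
    rw [norm_smul, Real.norm_eq_abs]
    calc c * |a i| = |a i| * c := mul_comm _ _
    _ ≤ |a i| * ‖e i‖ := by
        exact mul_le_mul_of_nonneg_left (hlow i) (abs_nonneg _)
  have h2 : ‖a i • e i‖ ≤ 2 * K * ‖PartialSum e a n‖ := by
    rw [hstep]
    calc ‖PartialSum e a (i + 1) - PartialSum e a i‖
        ≤ ‖PartialSum e a (i + 1)‖ + ‖PartialSum e a i‖ := norm_sub_le _ _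
      _ ≤ K * ‖PartialSum e a n‖ + K * ‖PartialSum e a n‖ :=
          add_le_add (hbasis a (i + 1) n hin) (hbasis a i n (le_of_lt hin))
      _ = 2 * K * ‖PartialSum e a n‖ := by ring
  rw [div_mul_eq_mul_div, le_div_iff₀ hc, mul_comm]
  exact h1.trans h2

/-- principle of small perturbations for bounded completeness:
if `{e n}` is a boundedly complete basic sequence with basis constant `K` and
`‖e n‖ ≥ c`, and `∑ ‖e n - v n‖ < c / (2 * K)`, then `{v n}` is a boundedly
complete basic sequence equivalent to `{e n}`. -/
theorem stmt13 {X : Type*} [NormedAddCommGroup X] [NormedSpace ℝ X] [CompleteSpace X]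
    (e v : ℕ → X) (K c : ℝ) (hK : 1 ≤ K) (hc : 0 < c)
    (hne : ∀ n, e n ≠ 0)
    (hbasis : ∀ (a : ℕ → ℝ) (m n : ℕ), m ≤ n →
      ‖PartialSum e a m‖ ≤ K * ‖PartialSum e a n‖)
    (hlow : ∀ n, c ≤ ‖e n‖)
    (hbc : BoundedlyComplete e)
    (hsum : Summable fun n => ‖e n - v n‖)
    (hsmall : (∑' n, ‖e n - v n‖) < c / (2 * K)) :
    IsBasicSeq v ∧ BoundedlyComplete v ∧ EquivSeq e v := by
  set S : ℝ := ∑' n, ‖e n - v n‖ with hS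
  have hK0 : (0:ℝ) < K := lt_of_lt_of_le one_pos hK
  have h2K0 : (0:ℝ) < 2 * K := by linarith
  have hS0 : 0 ≤ S := tsum_nonneg fun n => norm_nonneg _
  set θ : ℝ := 2 * K / c * S with hθ
  have hθ0 : 0 ≤ θ := mul_nonneg (div_nonneg (le_of_lt h2K0) hc.le) hS0
  have hθ1 : θ < 1 := by
    calc θ < 2 * K / c * (c / (2 * K)) :=
          mul_lt_mul_of_pos_left hsmall (div_pos h2K0 hc)
      _ = 1 := by field_simp
  -- difference of partial sums
  have hdiff : ∀ (a : ℕ → ℝ) (n : ℕ),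
      PartialSum v a n - PartialSum e a n = ∑ i ∈ Finset.range n, a i • (v i - e i) := by
    intro a n
    simp [PartialSum, smul_sub, Finset.sum_sub_distrib]
  have hδle : ∀ n, ‖e n - v n‖ ≤ S :=
    fun n => Summable.le_tsum hsum n fun m _ => norm_nonneg _
  -- perturbation bound
  have hpert : ∀ (a : ℕ → ℝ) (n : ℕ),
      ‖PartialSum v a n - PartialSum e a n‖ ≤ θ * ‖PartialSum e a n‖ := by
    intro a n
    rw [hdiff]
    calc ‖∑ i ∈ Finset.range n, a i • (v i - e i)‖
        ≤ ∑ i ∈ Finset.range n, ‖a i • (v i - e i)‖ := norm_sum_le _ _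
      _ ≤ ∑ i ∈ Finset.range n, (2 * K / c * ‖PartialSum e a n‖) * ‖e i - v i‖ := by
          apply Finset.sum_le_sum
          intro i hi
          rw [norm_smul, Real.norm_eq_abs, ← norm_neg (v i - e i), neg_sub]
          exact mul_le_mul_of_nonneg_right
            (aux_coeff_bound e K c hc hbasis hlow a (Finset.mem_range.mp hi))
            (norm_nonneg _)
      _ = (2 * K / c * ‖PartialSum e a n‖) * ∑ i ∈ Finset.range n, ‖e i - v i‖ := by
          rw [Finset.mul_sum]
      _ ≤ (2 * K / c * ‖PartialSum e a n‖) * S := by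
          apply mul_le_mul_of_nonneg_left
            (Summable.sum_le_tsum _ (fun m _ => norm_nonneg _) hsum)
          exact mul_nonneg (div_nonneg h2K0.le hc.le) (norm_nonneg _)
      _ = θ * ‖PartialSum e a n‖ := by ring
  -- lower and upper bounds
  have hlower : ∀ (a : ℕ → ℝ) (n : ℕ),
      (1 - θ) * ‖PartialSum e a n‖ ≤ ‖PartialSum v a n‖ := by
    intro a n
    have h1 : ‖PartialSum e a n‖ - ‖PartialSum v a n‖ ≤
        ‖PartialSum v a n - PartialSum e a n‖ := by
      rw [norm_sub_rev]; exact norm_sub_norm_le _ _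
    have := (h1.trans (hpert a n))
    nlinarith [norm_nonneg (PartialSum e a n)]
  have hupper : ∀ (a : ℕ → ℝ) (n : ℕ),
      ‖PartialSum v a n‖ ≤ (1 + θ) * ‖PartialSum e a n‖ := by
    intro a n
    have h1 : ‖PartialSum v a n‖ - ‖PartialSum e a n‖ ≤
        ‖PartialSum v a n - PartialSum e a n‖ := norm_sub_norm_le _ _
    have := h1.trans (hpert a n)
    linarith
  have h1θ : 0 < 1 - θ := by linarith
  -- transfer of boundedness v → e
  have hbtrans : ∀ (a : ℕ → ℝ) (M : ℝ), (∀ n, ‖PartialSum v a n‖ ≤ M) →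
      ∀ n, ‖PartialSum e a n‖ ≤ M / (1 - θ) := by
    intro a M hM n
    rw [le_div_iff₀ h1θ, mul_comm]
    exact (hlower a n).trans (hM n)
  -- convergence of the difference series under bounded e-partial-sums
  have hdconv : ∀ (a : ℕ → ℝ) (B : ℝ), (∀ n, ‖PartialSum e a n‖ ≤ B) →
      ∃ d : X, Filter.Tendsto (fun n => PartialSum v a n - PartialSum e a n)
        Filter.atTop (nhds d) := by
    intro a B hB
    have hcoef : ∀ i, |a i| ≤ 2 * K / c * B := by
      intro i
      exact (aux_coeff_bound e K c hc hbasis hlow a (Nat.lt_succ_self i)).trans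
        (mul_le_mul_of_nonneg_left (hB (i + 1)) (div_nonneg h2K0.le hc.le))
    have hsf : Summable fun i => a i • (v i - e i) := by
      apply Summable.of_norm
      apply Summable.of_nonneg_of_le (fun i => norm_nonneg _) _ (hsum.mul_left (2 * K / c * B))
      intro i
      rw [norm_smul, Real.norm_eq_abs, ← norm_neg (v i - e i), neg_sub]
      exact mul_le_mul_of_nonneg_right (hcoef i) (norm_nonneg _)
    refine ⟨∑' i, a i • (v i - e i), ?_⟩
    have := hsf.hasSum.tendsto_sum_nat
    convert this using 1
    funext n
    rw [hdiff]
  -- convergence transfer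
  have hev : ∀ a : ℕ → ℝ, SeriesConverges e a → SeriesConverges v a := by
    intro a ⟨x, hx⟩
    obtain ⟨B, hB⟩ := hx.norm.bddAbove_range
    have hB' : ∀ n, ‖PartialSum e a n‖ ≤ B := fun n => hB (Set.mem_range_self n)
    obtain ⟨d, hd⟩ := hdconv a B hB'
    refine ⟨x + d, ?_⟩
    have := hx.add hd
    convert this using 1
    funext n; simp
  have hve : ∀ a : ℕ → ℝ, SeriesConverges v a → SeriesConverges e a := by
    intro a ⟨x, hx⟩
    obtain ⟨M, hM⟩ := hx.norm.bddAbove_range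
    have hM' : ∀ n, ‖PartialSum v a n‖ ≤ M := fun n => hM (Set.mem_range_self n)
    have hB' := hbtrans a M hM'
    obtain ⟨d, hd⟩ := hdconv a (M / (1 - θ)) hB'
    refine ⟨x - d, ?_⟩
    have := hx.sub hd
    convert this using 1
    funext n; simp
  refine ⟨⟨?_, (1 + θ) * K / (1 - θ), ?_, ?_⟩, ?_, ?_⟩
  · -- v n ≠ 0
    intro n
    have h1 : ‖e n‖ - ‖v n‖ ≤ ‖e n - v n‖ := norm_sub_norm_le _ _
    have h2 : ‖e n - v n‖ ≤ S := hδle n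
    have hSc : S < c := by
      have : c / (2 * K) ≤ c := by
        rw [div_le_iff₀ h2K0]
        nlinarith
      linarith
    have : 0 < ‖v n‖ := by linarith [hlow n]
    exact norm_pos_iff.mp this
  · -- 1 ≤ K'
    rw [le_div_iff₀ h1θ]
    nlinarith
  · -- basis inequality for v
    intro a m n hmn
    rw [div_mul_eq_mul_div, le_div_iff₀ h1θ]
    calc ‖PartialSum v a m‖ * (1 - θ)
        = (1 - θ) * ‖PartialSum v a m‖ := mul_comm _ _
      _ ≤ (1 - θ) * ((1 + θ) * ‖PartialSum e a m‖) :=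
          mul_le_mul_of_nonneg_left (hupper a m) h1θ.le
      _ ≤ (1 - θ) * ((1 + θ) * (K * ‖PartialSum e a n‖)) := by
          apply mul_le_mul_of_nonneg_left _ h1θ.le
          exact mul_le_mul_of_nonneg_left (hbasis a m n hmn) (by linarith)
      _ = (1 + θ) * K * ((1 - θ) * ‖PartialSum e a n‖) := by ring
      _ ≤ (1 + θ) * K * ‖PartialSum v a n‖ := by
          apply mul_le_mul_of_nonneg_left (hlower a n)
          nlinarith
  · -- boundedly complete
    intro a ⟨M, hM⟩
    exact hev a (hbc a ⟨M / (1 - θ), hbtrans a M hM⟩)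
  · -- equivalence
    intro a
    exact ⟨hev a, hve a⟩

end
end

section
/- Let X be a Banach space with a boundedly complete basic sequence {e_n} that is also shrinking. Then the closed linear span [e_n] is reflexive. -/
open Filter Finset NormedSpace

noncomputable section

variable {X : Type*} [NormedAddCommGroup X] [NormedSpace ℝ X]

namespace Stmt15Aux

variable {X : Type*} [NormedAddCommGroup X] [NormedSpace ℝ X]

lemma ps_succ_sub (e : ℕ → X) (a : ℕ → ℝ) (n : ℕ) :
    a n • e n = PartialSum e a (n + 1) - PartialSum e a n := by
  simp [PartialSum, Finset.sum_range_succ]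

lemma ps_eq_of_support (e : ℕ → X) (a : ℕ → ℝ) (s : Finset ℕ)
    (h0 : ∀ i ∉ s, a i = 0) {n : ℕ} (hs : s ⊆ Finset.range n) :
    PartialSum e a n = ∑ i ∈ s, a i • e i :=
  (Finset.sum_subset hs fun i _ hi => by rw [h0 i hi, zero_smul]).symm

lemma basic_li (e : ℕ → X) (hne : ∀ n, e n ≠ 0) {K : ℝ}
    (hK : ∀ (a : ℕ → ℝ) (m n : ℕ), m ≤ n →
      ‖PartialSum e a m‖ ≤ K * ‖PartialSum e a n‖) :
    LinearIndependent ℝ e := by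
  rw [linearIndependent_iff'']
  intro s g hg hsum i
  have hzero : ∀ m, PartialSum e g m = 0 := by
    intro m
    have hsub : s ⊆ Finset.range (max m (s.sup id + 1)) := by
      intro j hj
      simp only [Finset.mem_range]
      exact lt_of_lt_of_le (Nat.lt_succ_of_le (Finset.le_sup (f := id) hj))
        (le_max_right _ _)
    have h1 : PartialSum e g (max m (s.sup id + 1)) = 0 := by
      rw [ps_eq_of_support e g s hg hsub, hsum]
    have h2 := hK g m (max m (s.sup id + 1)) (le_max_left _ _)
    rw [h1, norm_zero, mul_zero] at h2
    exact norm_le_zero_iff.mp h2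
  have hz : g i • e i = 0 := by
    rw [ps_succ_sub, hzero, hzero, sub_zero]
  rcases smul_eq_zero.mp hz with h | h
  · exact h
  · exact absurd h (hne i)

/-- Biorthogonal functionals with uniformly bounded partial-sum projections
on the span. -/
lemma exists_coords (e : ℕ → X) (hne : ∀ n, e n ≠ 0) {K : ℝ} (hK1 : 1 ≤ K)
    (hK : ∀ (a : ℕ → ℝ) (m n : ℕ), m ≤ n →
      ‖PartialSum e a m‖ ≤ K * ‖PartialSum e a n‖) :
    ∃ f : ℕ → (X →L[ℝ] ℝ),
      (∀ i j, f i (e j) = if i = j then 1 else 0) ∧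
      (∀ x ∈ Submodule.span ℝ (Set.range e), ∀ n,
        ‖∑ i ∈ Finset.range n, f i x • e i‖ ≤ K * ‖x‖) := by
  classical
  have hli : LinearIndependent ℝ e := basic_li e hne hK
  set M : Submodule ℝ X := Submodule.span ℝ (Set.range e) with hM
  -- coefficients of an element of the span
  have hrep : ∀ (x : M) (n : ℕ), (hli.repr x).support ⊆ Finset.range n →
      PartialSum e (fun i => hli.repr x i) n = (x : X) := by
    intro x n hsupp
    rw [ps_eq_of_support e _ (hli.repr x).support
      (fun i hi => Finsupp.notMem_support_iff.mp hi) hsupp]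
    have := hli.linearCombination_repr x
    rw [Finsupp.linearCombination_apply, Finsupp.sum] at this
    exact this
  have hps_bound : ∀ (x : M) (m : ℕ),
      ‖PartialSum e (fun i => hli.repr x i) m‖ ≤ K * ‖(x : X)‖ := by
    intro x m
    obtain ⟨N, hN⟩ : ∃ N, (hli.repr x).support ⊆ Finset.range N :=
      ⟨(hli.repr x).support.sup id + 1, fun j hj => Finset.mem_range.mpr
        (Nat.lt_succ_of_le (Finset.le_sup (f := id) hj))⟩
    have hsub : (hli.repr x).support ⊆ Finset.range (max m N) :=
      hN.trans (Finset.range_subset_range.mpr (le_max_right _ _))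
    calc ‖PartialSum e (fun i => hli.repr x i) m‖
        ≤ K * ‖PartialSum e (fun i => hli.repr x i) (max m N)‖ :=
          hK _ m _ (le_max_left _ _)
      _ = K * ‖(x : X)‖ := by rw [hrep x _ hsub]
  have hcoeff_bound : ∀ (i : ℕ) (x : M),
      |hli.repr x i| ≤ 2 * K / ‖e i‖ * ‖(x : X)‖ := by
    intro i x
    have h1 : ‖hli.repr x i • e i‖ ≤ 2 * K * ‖(x : X)‖ := by
      rw [ps_succ_sub e (fun j => hli.repr x j) i]
      calc ‖PartialSum e (fun j => hli.repr x j) (i + 1) -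
            PartialSum e (fun j => hli.repr x j) i‖
          ≤ ‖PartialSum e (fun j => hli.repr x j) (i + 1)‖ +
            ‖PartialSum e (fun j => hli.repr x j) i‖ := norm_sub_le _ _
        _ ≤ K * ‖(x : X)‖ + K * ‖(x : X)‖ := add_le_add (hps_bound x _) (hps_bound x _)
        _ = 2 * K * ‖(x : X)‖ := by ring
    have hei : (0 : ℝ) < ‖e i‖ := norm_pos_iff.mpr (hne i)
    rw [norm_smul, Real.norm_eq_abs] at h1
    rw [div_mul_eq_mul_div, le_div_iff₀ hei]
    exact h1
  -- continuous coordinate functionals on M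
  set c : ℕ → (M →L[ℝ] ℝ) := fun i =>
    LinearMap.mkContinuous ((Finsupp.lapply i) ∘ₗ (hli.repr : M →ₗ[ℝ] (ℕ →₀ ℝ)))
      (2 * K / ‖e i‖) (fun x => by
        simpa [Real.norm_eq_abs] using hcoeff_bound i x) with hc
  have hc_apply : ∀ (i : ℕ) (x : M), c i x = hli.repr x i := fun i x => rfl
  -- Hahn-Banach extensions
  choose f hf hfn using fun i => exists_extension_norm_eq M (c i)
  refine ⟨f, ?_, ?_⟩
  · intro i j
    have hj : e j ∈ M := Submodule.subset_span ⟨j, rfl⟩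
    have := hf i ⟨e j, hj⟩
    rw [this, hc_apply, hli.repr_eq_single j ⟨e j, hj⟩ rfl, Finsupp.single_apply]
    simp [eq_comm]
  · intro x hx n
    have heq : ∀ i, f i x = hli.repr ⟨x, hx⟩ i := by
      intro i
      have := hf i ⟨x, hx⟩
      rw [this, hc_apply]
    have : ∑ i ∈ Finset.range n, f i x • e i =
        PartialSum e (fun i => hli.repr ⟨x, hx⟩ i) n := by
      unfold PartialSum
      exact Finset.sum_congr rfl fun i _ => by rw [heq i]
    rw [this]
    exact hps_bound ⟨x, hx⟩ n

end Stmt15Aux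

set_option maxHeartbeats 1000000 in
/-- a shrinking and boundedly complete basic sequence spans a
reflexive subspace (James' criterion). -/
theorem stmt15 {X : Type*} [NormedAddCommGroup X] [NormedSpace ℝ X] [CompleteSpace X]
    (e : ℕ → X) (hb : IsBasicSeq e) (hbc : BoundedlyComplete e)
    (hsh : Shrinking e) :
    BanachReflexive ↥(closedSpan e) := by
  classical
  obtain ⟨hne, K, hK1, hK⟩ := hb
  obtain ⟨f, hforth, hfb⟩ := Stmt15Aux.exists_coords e hne hK1 hK
  have hK0 : (0 : ℝ) ≤ K := le_trans zero_le_one hK1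
  set M : Submodule ℝ X := Submodule.span ℝ (Set.range e) with hMdef
  set Y : Submodule ℝ X := closedSpan e with hYdef
  have hYM : Y = M.topologicalClosure := rfl
  have heM : ∀ i, e i ∈ M := fun i => Submodule.subset_span ⟨i, rfl⟩
  have heY : ∀ i, e i ∈ Y := fun i => Submodule.le_topologicalClosure M (heM i)
  -- partial-sum operators on X
  set Sx : ℕ → (X →L[ℝ] X) :=
    fun n => ∑ i ∈ Finset.range n, (f i).smulRight (e i) with hSxdef
  have hSx_apply : ∀ n x, Sx n x = ∑ i ∈ Finset.range n, f i x • e i := by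
    intro n x
    simp [hSxdef, ContinuousLinearMap.sum_apply]
  have hSxY : ∀ n, ∀ x ∈ Y, ‖Sx n x‖ ≤ K * ‖x‖ := by
    intro n x hx
    have hclosed : IsClosed {z : X | ‖Sx n z‖ ≤ K * ‖z‖} :=
      isClosed_le ((Sx n).continuous.norm) (continuous_const.mul continuous_norm)
    have hMC : (M : Set X) ⊆ {z : X | ‖Sx n z‖ ≤ K * ‖z‖} := by
      intro z hz
      simp only [Set.mem_setOf_eq, hSx_apply]
      exact hfb z hz n
    have hx' : x ∈ closure (M : Set X) := by
      rw [← Submodule.topologicalClosure_coe, ← hYM]; exact hx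
    exact closure_minimal hMC hclosed hx'
  have hSx_memY : ∀ n x, Sx n x ∈ Y := by
    intro n x
    rw [hSx_apply]
    exact Submodule.sum_mem Y fun i _ => Submodule.smul_mem Y _ (heY i)
  -- partial-sum operators on Y
  set S : ℕ → (↥Y →L[ℝ] ↥Y) :=
    fun n => ((Sx n).comp Y.subtypeL).codRestrict Y (fun y => hSx_memY n y) with hSdef
  have hS_apply : ∀ n (y : ↥Y), ((S n y : X)) = Sx n (y : X) := fun n y => rfl
  have hS_norm : ∀ n (y : ↥Y), ‖S n y‖ ≤ K * ‖y‖ := by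
    intro n y
    show ‖((S n y : X))‖ ≤ K * ‖(y : X)‖
    rw [hS_apply]
    exact hSxY n _ y.2
  have hS_opnorm : ∀ n, ‖S n‖ ≤ K := fun n =>
    ContinuousLinearMap.opNorm_le_bound _ hK0 (hS_norm n)
  -- tail membership of the remainders
  have htail : ∀ n, ∀ x ∈ Y, x - Sx n x ∈ tailSpan e n := by
    intro n
    set R : X →L[ℝ] X := ContinuousLinearMap.id ℝ X - Sx n with hR
    have hRapp : ∀ x, R x = x - Sx n x := fun x => rfl
    have hgen : ∀ k, R (e k) ∈ tailSpan e n := by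
      intro k
      have hSxek : Sx n (e k) = if k ∈ Finset.range n then e k else 0 := by
        rw [hSx_apply, ← Finset.sum_ite_eq' (Finset.range n) k e]
        refine Finset.sum_congr rfl fun i _ => ?_
        rw [hforth i k]
        by_cases h : i = k <;> simp [h]
      rw [hRapp, hSxek]
      by_cases h : k ∈ Finset.range n
      · simp [h]
      · rw [if_neg h, sub_zero]
        refine Submodule.le_topologicalClosure _ (Submodule.subset_span ?_)
        exact ⟨k, le_of_not_gt (fun hlt => h (Finset.mem_range.mpr hlt)), rfl⟩
    have hP : M ≤ (tailSpan e n).comap (R : X →ₗ[ℝ] X) := by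
      rw [hMdef, Submodule.span_le]
      rintro _ ⟨k, rfl⟩
      exact hgen k
    have hPc : IsClosed (((tailSpan e n).comap (R : X →ₗ[ℝ] X) : Submodule ℝ X) : Set X) := by
      have : (((tailSpan e n).comap (R : X →ₗ[ℝ] X) : Submodule ℝ X) : Set X)
          = R ⁻¹' (tailSpan e n : Set X) := rfl
      rw [this]
      exact (Submodule.isClosed_topologicalClosure _).preimage R.continuous
    intro x hx
    have hx' : x ∈ M.topologicalClosure := hx
    exact Submodule.topologicalClosure_minimal M hP hPc hx'
  -- precomposition operators on the dual
  set T :=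
    fun n => (ContinuousLinearMap.compL ℝ ↥Y ↥Y ℝ).flip (S n) with hT
  have hT_apply : ∀ n (h : (↥Y →L[ℝ] ℝ)), T n h = h.comp (S n) := fun n h => rfl
  have hT_norm : ∀ n, ‖T n‖ ≤ K := by
    intro n
    refine ContinuousLinearMap.opNorm_le_bound _ hK0 fun h => ?_
    rw [hT_apply]
    calc ‖h.comp (S n)‖ ≤ ‖h‖ * ‖S n‖ := ContinuousLinearMap.opNorm_comp_le _ _
      _ ≤ ‖h‖ * K := by
          have := hS_opnorm n
          gcongr
      _ = K * ‖h‖ := mul_comm _ _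
  -- the surjectivity argument
  intro F
  set g : ℕ → (↥Y →L[ℝ] ℝ) := fun i => (f i).comp Y.subtypeL with hgdef
  set lam : ℕ → ℝ := fun i => F (g i) with hlam
  set eY : ℕ → ↥Y := fun i => ⟨e i, heY i⟩ with heYdef
  have hps_memY : ∀ n, PartialSum e lam n ∈ Y :=
    fun n => Submodule.sum_mem Y fun i _ => Submodule.smul_mem Y _ (heY i)
  set xn : ℕ → ↥Y := fun n => ⟨PartialSum e lam n, hps_memY n⟩ with hxn
  have hTkey : ∀ n (h : (↥Y →L[ℝ] ℝ)), F (h.comp (S n)) = h (xn n) := by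
    intro n h
    have h1 : ∀ y : ↥Y, S n y = ∑ i ∈ Finset.range n, g i y • eY i := by
      intro y
      apply Subtype.ext
      rw [hS_apply n y, hSx_apply]
      push_cast
      rfl
    have hcomp : h.comp (S n) = ∑ i ∈ Finset.range n, h (eY i) • g i := by
      ext y
      rw [ContinuousLinearMap.comp_apply, h1 y, map_sum]
      simp only [ContinuousLinearMap.coe_sum', Finset.sum_apply,
        ContinuousLinearMap.coe_smul', Pi.smul_apply, map_smul, smul_eq_mul]
      exact Finset.sum_congr rfl fun i _ => mul_comm _ _
    have hxneq : xn n = ∑ i ∈ Finset.range n, lam i • eY i := by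
      apply Subtype.ext
      push_cast
      rfl
    rw [hcomp, map_sum, hxneq, map_sum]
    simp only [map_smul, smul_eq_mul]
    exact Finset.sum_congr rfl fun i _ => mul_comm _ _
  have hFT : ∀ n, inclusionInDoubleDual ℝ ↥Y (xn n) = F.comp (T n) := by
    intro n
    ext h
    rw [dual_def, ContinuousLinearMap.comp_apply, hT_apply]
    exact (hTkey n h).symm
  have hbound : ∀ n, ‖PartialSum e lam n‖ ≤ K * ‖F‖ := by
    intro n
    have h1 : ‖PartialSum e lam n‖ = ‖xn n‖ := rfl
    have h2 : ‖xn n‖ = ‖inclusionInDoubleDual ℝ ↥Y (xn n)‖ :=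
      ((inclusionInDoubleDualLi ℝ).norm_map (xn n)).symm
    rw [h1, h2, hFT n]
    calc ‖F.comp (T n)‖ ≤ ‖F‖ * ‖T n‖ := ContinuousLinearMap.opNorm_comp_le _ _
      _ ≤ ‖F‖ * K := by
          have := hT_norm n
          gcongr
      _ = K * ‖F‖ := mul_comm _ _
  obtain ⟨x, hx⟩ := hbc lam ⟨K * ‖F‖, hbound⟩
  have hYclosed : IsClosed (Y : Set X) := by
    rw [hYM, Submodule.topologicalClosure_coe]
    exact isClosed_closure
  have hxY : x ∈ Y := hYclosed.mem_of_tendsto hx (Filter.Eventually.of_forall hps_memY)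
  refine ⟨⟨x, hxY⟩, ?_⟩
  ext h
  rw [dual_def]
  -- limit 1 : h (xn n) → h ⟨x, hxY⟩
  have hxn_tendsto : Filter.Tendsto xn Filter.atTop (nhds (⟨x, hxY⟩ : ↥Y)) := by
    rw [Topology.IsInducing.subtypeVal.tendsto_nhds_iff]
    exact hx
  have lim1 : Filter.Tendsto (fun n => h (xn n)) Filter.atTop (nhds (h ⟨x, hxY⟩)) :=
    (h.continuous.tendsto _).comp hxn_tendsto
  -- limit 2 : F (T n h) → F h
  have hKpos : (0 : ℝ) < K + 1 := by linarith
  have hTh : Filter.Tendsto (fun n => T n h) Filter.atTop (nhds h) := by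
    refine NormedAddCommGroup.tendsto_atTop.2 ?_
    intro ε hε
    obtain ⟨ht, hht, -⟩ := exists_extension_norm_eq Y h
    set ε' : ℝ := ε / (2 * (K + 1)) with hε'
    have hε'pos : 0 < ε' := by positivity
    obtain ⟨N, hN⟩ := hsh ht ε' hε'pos
    refine ⟨N, fun n hn => ?_⟩
    have key : ∀ z ∈ tailSpan e n, |ht z| ≤ ε' * ‖z‖ := by
      intro z hz
      rcases eq_or_ne z 0 with rfl | hz0
      · simp
      · have hzn : (0 : ℝ) < ‖z‖ := norm_pos_iff.mpr hz0
        have h1 : |ht (‖z‖⁻¹ • z)| ≤ ε' := by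
          refine hN n hn _ (Submodule.smul_mem _ _ hz) ?_
          rw [norm_smul, norm_inv, norm_norm, inv_mul_cancel₀ hzn.ne']
        rw [map_smul, smul_eq_mul, abs_mul, abs_inv, abs_norm] at h1
        calc |ht z| = ‖z‖ * (‖z‖⁻¹ * |ht z|) := by field_simp
          _ ≤ ‖z‖ * ε' := by gcongr
          _ = ε' * ‖z‖ := mul_comm _ _
    have hb2 : ‖T n h - h‖ ≤ ε' * (K + 1) := by
      refine ContinuousLinearMap.opNorm_le_bound _ (by positivity) fun y => ?_
      have heval : (T n h - h) y = ht (Sx n (y : X) - (y : X)) := by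
        rw [ContinuousLinearMap.sub_apply, hT_apply, ContinuousLinearMap.comp_apply,
          ← hht (S n y), ← hht y, ← map_sub]
        congr 1
      rw [heval, Real.norm_eq_abs]
      have hmem : Sx n (y : X) - (y : X) ∈ tailSpan e n := by
        have h3 := htail n (y : X) y.2
        have h4 := Submodule.neg_mem _ h3
        rwa [neg_sub] at h4
      calc |ht (Sx n (y : X) - (y : X))| ≤ ε' * ‖Sx n (y : X) - (y : X)‖ := key _ hmem
        _ ≤ ε' * ((K + 1) * ‖y‖) := by
            gcongr
            calc ‖Sx n (y : X) - (y : X)‖ ≤ ‖Sx n (y : X)‖ + ‖(y : X)‖ := norm_sub_le _ _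
              _ ≤ K * ‖(y : X)‖ + ‖(y : X)‖ := by
                  have := hSxY n _ y.2
                  linarith
              _ = (K + 1) * ‖(y : X)‖ := by ring
              _ = (K + 1) * ‖y‖ := by rw [Submodule.norm_coe]
        _ = ε' * (K + 1) * ‖y‖ := by ring
    calc ‖T n h - h‖ ≤ ε' * (K + 1) := hb2
      _ = ε / 2 := by
          rw [hε']
          field_simp
      _ < ε := by linarith
  have lim2 : Filter.Tendsto (fun n => F (T n h)) Filter.atTop (nhds (F h)) :=
    (F.continuous.tendsto h).comp hTh
  have heqfun : (fun n => F (T n h)) = fun n => h (xn n) := by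
    funext n
    rw [hT_apply]
    exact hTkey n h
  rw [heqfun] at lim2
  exact tendsto_nhds_unique lim1 lim2

end
end
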